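/- arXiv:2003.02496 — 6 statements merged into one kernel-verified Lean document; each statement's English description precedes it below -/
import Mathlib

section
/- For each i with 1 ≤ i ≤ n−1, the endomorphism β̃_i of the free group E is bijective, i.e., β̃_i is an automorphism of E. -/
/-- The free group `E` on the generators `e_{k,j}`, `k = 0,1,…,n`, `j ∈ ℤ/dℤ`,
of the covering groupoid of the `d`-fold branched cover over a disk with `n`
branch points. -/
abbrev Egrp (n d : ℕ) : Type := FreeGroup (Fin (n + 1) × ZMod d)

/-- The generator `e_{k,j}` of `E` (first index read as a natural number). -/
def eGen (n d : ℕ) (k : ℕ) (j : ZMod d) : Egrp n d :=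
  FreeGroup.of ((Fin.ofNat (n + 1) k), j)

/-- The lift `β̃_i` of the half Dehn twist `β_i`, as an endomorphism of the
free group `E`, defined on generators by
`e_{i−1,j} ↦ e_{i−1,j}·e_{i,j+1}`, `e_{i,j} ↦ e_{i,j+1}⁻¹`,
`e_{i+1,j} ↦ e_{i,j}·e_{i+1,j}`, and fixing all other generators. -/
def betaTilde (n d : ℕ) (i : ℕ) : Egrp n d →* Egrp n d :=
  FreeGroup.lift fun p =>
    if (p.1 : ℕ) + 1 = i then
      FreeGroup.of p * eGen n d i (p.2 + 1)
    else if (p.1 : ℕ) = i then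
      (FreeGroup.of (p.1, p.2 + 1))⁻¹
    else if (p.1 : ℕ) = i + 1 then
      eGen n d i p.2 * FreeGroup.of p
    else
      FreeGroup.of p

/-- The inverse of `β̃_i`. -/
def gammaTilde (n d : ℕ) (i : ℕ) : Egrp n d →* Egrp n d :=
  FreeGroup.lift fun p =>
    if (p.1 : ℕ) + 1 = i then
      FreeGroup.of p * eGen n d i p.2
    else if (p.1 : ℕ) = i then
      (FreeGroup.of (p.1, p.2 - 1))⁻¹
    else if (p.1 : ℕ) = i + 1 then
      eGen n d i (p.2 - 1) * FreeGroup.of p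
    else
      FreeGroup.of p

lemma betaTilde_of (n d i : ℕ) (p : Fin (n + 1) × ZMod d) :
    betaTilde n d i (FreeGroup.of p) =
    if (p.1 : ℕ) + 1 = i then
      FreeGroup.of p * eGen n d i (p.2 + 1)
    else if (p.1 : ℕ) = i then
      (FreeGroup.of (p.1, p.2 + 1))⁻¹
    else if (p.1 : ℕ) = i + 1 then
      eGen n d i p.2 * FreeGroup.of p
    else
      FreeGroup.of p := FreeGroup.lift_apply_of

lemma gammaTilde_of (n d i : ℕ) (p : Fin (n + 1) × ZMod d) :
    gammaTilde n d i (FreeGroup.of p) =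
    if (p.1 : ℕ) + 1 = i then
      FreeGroup.of p * eGen n d i p.2
    else if (p.1 : ℕ) = i then
      (FreeGroup.of (p.1, p.2 - 1))⁻¹
    else if (p.1 : ℕ) = i + 1 then
      eGen n d i (p.2 - 1) * FreeGroup.of p
    else
      FreeGroup.of p := FreeGroup.lift_apply_of

/-- For each `i` with `1 ≤ i ≤ n−1`, the endomorphism `β̃_i` of the free group
`E` is bijective, i.e. `β̃_i` is an automorphism of `E`. -/
theorem betaTilde_bijective (n d : ℕ) (hn : 2 ≤ n) (hd : 2 ≤ d)
    (i : ℕ) (hi1 : 1 ≤ i) (hi2 : i ≤ n - 1) :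
    Function.Bijective (betaTilde n d i) := by
  have hci : i % (n + 1) = i := Nat.mod_eq_of_lt (by omega)
  have hbg : (betaTilde n d i).comp (gammaTilde n d i) = MonoidHom.id _ := by
    apply FreeGroup.ext_hom
    rintro ⟨k, j⟩
    simp only [MonoidHom.comp_apply, MonoidHom.id_apply, gammaTilde_of]
    by_cases h1 : (k : ℕ) + 1 = i
    · simp [h1, eGen, betaTilde_of, hci, (by omega : ¬ i + 1 = i)]
    · by_cases h2 : (k : ℕ) = i
      · simp [h1, h2, betaTilde_of, (by omega : ¬ (k:ℕ) + 1 = i)]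
      · by_cases h3 : (k : ℕ) = i + 1
        · simp [h1, h2, h3, eGen, betaTilde_of, hci,
            (by omega : ¬ i + 1 = i), (by omega : ¬ (k:ℕ) + 1 = i)]
          rw [if_neg (by omega : ¬ i + 1 + 1 = i)]
          simp [betaTilde_of, h3, hci, eGen, (by omega : ¬ i + 1 = i),
            (by omega : ¬ i + 1 + 1 = i)]
          exact fun h => absurd h (by omega)
        · simp [h1, h2, h3, betaTilde_of]
  have hgb : (gammaTilde n d i).comp (betaTilde n d i) = MonoidHom.id _ := by
    apply FreeGroup.ext_hom
    rintro ⟨k, j⟩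
    simp only [MonoidHom.comp_apply, MonoidHom.id_apply, betaTilde_of]
    by_cases h1 : (k : ℕ) + 1 = i
    · simp [h1, eGen, gammaTilde_of, hci, (by omega : ¬ i + 1 = i)]
    · by_cases h2 : (k : ℕ) = i
      · simp [h1, h2, gammaTilde_of, (by omega : ¬ (k:ℕ) + 1 = i)]
      · by_cases h3 : (k : ℕ) = i + 1
        · simp [h1, h2, h3, eGen, gammaTilde_of, hci,
            (by omega : ¬ i + 1 = i), (by omega : ¬ (k:ℕ) + 1 = i)]
          rw [if_neg (by omega : ¬ i + 1 + 1 = i)]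
          simp [gammaTilde_of, h3, hci, eGen, (by omega : ¬ i + 1 = i),
            (by omega : ¬ i + 1 + 1 = i)]
          exact fun h => absurd h (by omega)
        · simp [h1, h2, h3, gammaTilde_of]
  constructor
  · exact Function.LeftInverse.injective
      (fun x => DFunLike.congr_fun hgb x)
  · exact Function.RightInverse.surjective
      (fun x => DFunLike.congr_fun hbg x)
end

section
/- The endomorphisms β̃_i satisfy the far commutation relation: for all i, k with 1 ≤ i, k ≤ n−1 and |i − k| ≥ 2, β̃_i ∘ β̃_k = β̃_k ∘ β̃_i as endomorphisms of E. -/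
lemma betaTilde_aux_comm (n d : ℕ) (i k : ℕ) (hk2 : k ≤ n - 1) (hn : 2 ≤ n)
    (hik : i + 2 ≤ k) :
    (betaTilde n d i).comp (betaTilde n d k) =
      (betaTilde n d k).comp (betaTilde n d i) := by
  have hin : i < n + 1 := by omega
  have hkn : k < n + 1 := by omega
  apply FreeGroup.ext_hom
  rintro ⟨a, j⟩
  have hvi : ((Fin.ofNat (n+1) i : Fin (n+1)) : ℕ) = i := (Fin.val_ofNat _ _).trans (Nat.mod_eq_of_lt hin)
  have hvk : ((Fin.ofNat (n+1) k : Fin (n+1)) : ℕ) = k := (Fin.val_ofNat _ _).trans (Nat.mod_eq_of_lt hkn)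
  simp only [MonoidHom.comp_apply, betaTilde_of, eGen]
  split_ifs with h1 h2 h3 <;>
    simp only [map_mul, map_inv, betaTilde_of, hvi, hvk, eGen] <;>
    split_ifs <;> first | rfl | omega

/-- The lifts `β̃_i` satisfy the far commutation relation: for all `i, k` with
`1 ≤ i, k ≤ n−1` and `|i − k| ≥ 2`, `β̃_i ∘ β̃_k = β̃_k ∘ β̃_i`
as endomorphisms of `E`. -/
theorem betaTilde_far_commutation (n d : ℕ) (hn : 2 ≤ n) (hd : 2 ≤ d)
    (i k : ℕ) (hi1 : 1 ≤ i) (hi2 : i ≤ n - 1) (hk1 : 1 ≤ k) (hk2 : k ≤ n - 1)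
    (hik : i + 2 ≤ k ∨ k + 2 ≤ i) :
    (betaTilde n d i).comp (betaTilde n d k) =
      (betaTilde n d k).comp (betaTilde n d i) := by
  rcases hik with h | h
  · exact betaTilde_aux_comm n d i k hk2 hn h
  · exact (betaTilde_aux_comm n d k i hi2 hn h).symm
end

section
/- There exists a group homomorphism Φ from the braid group B_n to the automorphism group Aut(E) such that Φ(σ_i) equals the automorphism β̃_i for each i = 1, …, n−1. -/
-- inverse endomorphism
def betaTildeInv (n d : ℕ) (i : ℕ) : Egrp n d →* Egrp n d :=
  FreeGroup.lift fun p =>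
    if (p.1 : ℕ) + 1 = i then
      FreeGroup.of p * eGen n d i p.2
    else if (p.1 : ℕ) = i then
      (eGen n d i (p.2 - 1))⁻¹
    else if (p.1 : ℕ) = i + 1 then
      eGen n d i (p.2 - 1) * FreeGroup.of p
    else
      FreeGroup.of p

lemma of_eq_eGen (n d : ℕ) (p : Fin (n+1) × ZMod d) :
    FreeGroup.of p = eGen n d (p.1 : ℕ) p.2 := by
  unfold eGen
  rw [Fin.ofNat_val_eq_self]

lemma eGen_fst (n d k : ℕ) (hk : k ≤ n) (j : ZMod d) :
    (((Fin.ofNat (n+1) k : Fin (n+1)) : ℕ)) = k := by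
  rw [Fin.val_ofNat, Nat.mod_eq_of_lt (by omega)]

lemma betaTilde_eGen (n d i k : ℕ) (hk : k ≤ n) (j : ZMod d) :
    betaTilde n d i (eGen n d k j) =
      if k + 1 = i then eGen n d k j * eGen n d i (j + 1)
      else if k = i then (eGen n d k (j + 1))⁻¹
      else if k = i + 1 then eGen n d i j * eGen n d k j
      else eGen n d k j := by
  unfold betaTilde eGen
  rw [FreeGroup.lift_apply_of]
  simp only [Fin.val_ofNat, Nat.mod_eq_of_lt (show k < n+1 by omega)]

lemma betaTildeInv_eGen (n d i k : ℕ) (hk : k ≤ n) (j : ZMod d) :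
    betaTildeInv n d i (eGen n d k j) =
      if k + 1 = i then eGen n d k j * eGen n d i j
      else if k = i then (eGen n d i (j - 1))⁻¹
      else if k = i + 1 then eGen n d i (j - 1) * eGen n d k j
      else eGen n d k j := by
  unfold betaTildeInv eGen
  rw [FreeGroup.lift_apply_of]
  simp only [Fin.val_ofNat, Nat.mod_eq_of_lt (show k < n+1 by omega)]


lemma of_eq_eGen' (n d : ℕ) (p1 : Fin (n+1)) (j : ZMod d) :
    FreeGroup.of (p1, j) = eGen n d (p1 : ℕ) j := of_eq_eGen n d (p1, j)

lemma bt_case1 (n d i k : ℕ) (j : ZMod d) (hk : k ≤ n) (h : k + 1 = i) :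
    betaTilde n d i (eGen n d k j) = eGen n d k j * eGen n d i (j + 1) := by
  rw [betaTilde_eGen n d i k hk, if_pos h]

lemma bt_case2 (n d i : ℕ) (j : ZMod d) (hi : i ≤ n) :
    betaTilde n d i (eGen n d i j) = (eGen n d i (j + 1))⁻¹ := by
  rw [betaTilde_eGen n d i i hi, if_neg (by omega), if_pos rfl]

lemma bt_case3 (n d i : ℕ) (j : ZMod d) (hi : i + 1 ≤ n) :
    betaTilde n d i (eGen n d (i+1) j) = eGen n d i j * eGen n d (i+1) j := by
  rw [betaTilde_eGen n d i (i+1) hi, if_neg (by omega), if_neg (by omega), if_pos rfl]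

lemma bt_other (n d i k : ℕ) (j : ZMod d) (hk : k ≤ n)
    (h1 : k + 1 ≠ i) (h2 : k ≠ i) (h3 : k ≠ i + 1) :
    betaTilde n d i (eGen n d k j) = eGen n d k j := by
  rw [betaTilde_eGen n d i k hk, if_neg h1, if_neg h2, if_neg h3]

lemma bti_case1 (n d i k : ℕ) (j : ZMod d) (hk : k ≤ n) (h : k + 1 = i) :
    betaTildeInv n d i (eGen n d k j) = eGen n d k j * eGen n d i j := by
  rw [betaTildeInv_eGen n d i k hk, if_pos h]

lemma bti_case2 (n d i : ℕ) (j : ZMod d) (hi : i ≤ n) :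
    betaTildeInv n d i (eGen n d i j) = (eGen n d i (j - 1))⁻¹ := by
  rw [betaTildeInv_eGen n d i i hi, if_neg (by omega), if_pos rfl]

lemma bti_case3 (n d i : ℕ) (j : ZMod d) (hi : i + 1 ≤ n) :
    betaTildeInv n d i (eGen n d (i+1) j) = eGen n d i (j - 1) * eGen n d (i+1) j := by
  rw [betaTildeInv_eGen n d i (i+1) hi, if_neg (by omega), if_neg (by omega), if_pos rfl]

lemma bti_other (n d i k : ℕ) (j : ZMod d) (hk : k ≤ n)
    (h1 : k + 1 ≠ i) (h2 : k ≠ i) (h3 : k ≠ i + 1) :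
    betaTildeInv n d i (eGen n d k j) = eGen n d k j := by
  rw [betaTildeInv_eGen n d i k hk, if_neg h1, if_neg h2, if_neg h3]

lemma betaTilde_leftInv (n d i : ℕ) (hi : 1 ≤ i) (hin : i + 1 ≤ n) :
    (betaTildeInv n d i).comp (betaTilde n d i) = MonoidHom.id _ := by
  ext p
  obtain ⟨p1, j⟩ := p
  have hk : (p1 : ℕ) ≤ n := Nat.lt_succ_iff.mp p1.isLt
  rw [MonoidHom.comp_apply, MonoidHom.id_apply, of_eq_eGen']
  generalize (p1 : ℕ) = k at hk ⊢
  by_cases h1 : k + 1 = i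
  · obtain rfl : i = k + 1 := h1.symm
    simp (disch := omega) [bt_case1, bt_case2, bti_case1, bti_case2, map_mul, map_inv,
      add_sub_cancel_right, sub_add_cancel]
  by_cases h2 : k = i
  · subst h2
    simp (disch := omega) [bt_case2, bti_case2, map_inv, add_sub_cancel_right]
  by_cases h3 : k = i + 1
  · subst h3
    simp (disch := omega) [bt_case3, bt_case2, bti_case3, bti_case2, map_mul, map_inv,
      add_sub_cancel_right, sub_add_cancel]
  · simp (disch := omega) [bt_other, bti_other]

lemma betaTilde_rightInv (n d i : ℕ) (hi : 1 ≤ i) (hin : i + 1 ≤ n) :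
    (betaTilde n d i).comp (betaTildeInv n d i) = MonoidHom.id _ := by
  ext p
  obtain ⟨p1, j⟩ := p
  have hk : (p1 : ℕ) ≤ n := Nat.lt_succ_iff.mp p1.isLt
  rw [MonoidHom.comp_apply, MonoidHom.id_apply, of_eq_eGen']
  generalize (p1 : ℕ) = k at hk ⊢
  by_cases h1 : k + 1 = i
  · obtain rfl : i = k + 1 := h1.symm
    simp (disch := omega) [bt_case1, bt_case2, bti_case1, bti_case2, map_mul, map_inv,
      add_sub_cancel_right, sub_add_cancel]
  by_cases h2 : k = i
  · subst h2
    simp (disch := omega) [bt_case2, bti_case2, map_inv, sub_add_cancel]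
  by_cases h3 : k = i + 1
  · subst h3
    simp (disch := omega) [bt_case3, bt_case2, bti_case3, bti_case2, map_mul, map_inv,
      add_sub_cancel_right, sub_add_cancel]
  · simp (disch := omega) [bt_other, bti_other]

lemma braid_adj (n d a : ℕ) (h1 : 1 ≤ a) (h2 : a + 2 ≤ n) :
    (betaTilde n d a).comp ((betaTilde n d (a+1)).comp (betaTilde n d a)) =
    (betaTilde n d (a+1)).comp ((betaTilde n d a).comp (betaTilde n d (a+1))) := by
  ext p
  obtain ⟨p1, j⟩ := p
  have hk : (p1 : ℕ) ≤ n := Nat.lt_succ_iff.mp p1.isLt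
  simp only [MonoidHom.comp_apply, of_eq_eGen']
  generalize (p1 : ℕ) = k at hk ⊢
  by_cases hc1 : k + 1 = a
  · obtain rfl : a = k + 1 := hc1.symm
    simp (disch := omega) [bt_case1, bt_case2, bt_case3, bt_other, map_mul, map_inv, mul_assoc]
  by_cases hc2 : k = a
  · subst hc2
    simp (disch := omega) [bt_case1, bt_case2, bt_case3, bt_other, map_mul, map_inv, mul_assoc]
  by_cases hc3 : k = a + 1
  · subst hc3
    simp (disch := omega) [bt_case1, bt_case2, bt_case3, bt_other, map_mul, map_inv, mul_assoc]
  by_cases hc4 : k = a + 2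
  · subst hc4
    simp (disch := omega) [bt_case1, bt_case2, bt_case3, bt_other, map_mul, map_inv, mul_assoc]
  · simp (disch := omega) [bt_other]

lemma braid_comm (n d a b : ℕ) (h1 : 1 ≤ a) (hab : a + 2 ≤ b) (hb : b + 1 ≤ n) :
    (betaTilde n d a).comp (betaTilde n d b) =
    (betaTilde n d b).comp (betaTilde n d a) := by
  ext p
  obtain ⟨p1, j⟩ := p
  have hk : (p1 : ℕ) ≤ n := Nat.lt_succ_iff.mp p1.isLt
  simp only [MonoidHom.comp_apply, of_eq_eGen']
  generalize (p1 : ℕ) = k at hk ⊢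
  by_cases hc1 : k + 1 = a
  · obtain rfl : a = k + 1 := hc1.symm
    simp (disch := omega) [bt_case1, bt_case2, bt_case3, bt_other, map_mul, map_inv, mul_assoc]
  by_cases hc2 : k = a
  · subst hc2
    simp (disch := omega) [bt_case1, bt_case2, bt_case3, bt_other, map_mul, map_inv, mul_assoc]
  by_cases hc3 : k = a + 1
  · subst hc3
    by_cases hb1 : a + 2 = b
    · obtain rfl : b = a + 2 := hb1.symm
      simp (disch := omega) [bt_case1, bt_case2, bt_case3, bt_other, map_mul, map_inv, mul_assoc]
    · simp (disch := omega) [bt_case1, bt_case2, bt_case3, bt_other, map_mul, map_inv, mul_assoc]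
  by_cases hc4 : k + 1 = b
  · obtain rfl : b = k + 1 := hc4.symm
    simp (disch := omega) [bt_case1, bt_case2, bt_case3, bt_other, map_mul, map_inv, mul_assoc]
  by_cases hc5 : k = b
  · subst hc5
    simp (disch := omega) [bt_case1, bt_case2, bt_case3, bt_other, map_mul, map_inv, mul_assoc]
  by_cases hc6 : k = b + 1
  · subst hc6
    simp (disch := omega) [bt_case1, bt_case2, bt_case3, bt_other, map_mul, map_inv, mul_assoc]
  · simp (disch := omega) [bt_other]

def betaAut (n d i : ℕ) (hi : 1 ≤ i) (hin : i + 1 ≤ n) : MulAut (Egrp n d) where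
  toFun := betaTilde n d i
  invFun := betaTildeInv n d i
  left_inv := fun x => DFunLike.congr_fun (betaTilde_leftInv n d i hi hin) x
  right_inv := fun x => DFunLike.congr_fun (betaTilde_rightInv n d i hi hin) x
  map_mul' := map_mul _

@[simp] lemma betaAut_apply (n d i : ℕ) (hi : 1 ≤ i) (hin : i + 1 ≤ n) (x : Egrp n d) :
    betaAut n d i hi hin x = betaTilde n d i x := rfl


/-- The braid relations on the generators `σ_1, …, σ_m` (indexed by `Fin m`,
where the generator of index `a` is `σ_{a+1}`): `σ_aσ_bσ_a = σ_bσ_aσ_b` for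
adjacent indices and `σ_aσ_b = σ_bσ_a` for far apart indices. -/
def braidRels (m : ℕ) : Set (FreeGroup (Fin m)) :=
  {r | (∃ a b : Fin m, (a : ℕ) + 1 = (b : ℕ) ∧
          r = FreeGroup.of a * FreeGroup.of b * FreeGroup.of a *
                (FreeGroup.of b * FreeGroup.of a * FreeGroup.of b)⁻¹) ∨
       (∃ a b : Fin m, (a : ℕ) + 2 ≤ (b : ℕ) ∧
          r = FreeGroup.of a * FreeGroup.of b * (FreeGroup.of b * FreeGroup.of a)⁻¹)}

/-- The braid group `B_n` on `n` strands, presented with generators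
`σ_1, …, σ_{n−1}` and the braid relations. -/
abbrev BraidGroup (n : ℕ) : Type := PresentedGroup (braidRels (n - 1))

/-- There is a group homomorphism `Φ : B_n → Aut(E)` sending each braid
generator `σ_i` (for `i = 1, …, n−1`) to the automorphism `β̃_i`. -/
theorem exists_braid_representation (n d : ℕ) (hn : 2 ≤ n) (hd : 2 ≤ d) :
    ∃ Φ : BraidGroup n →* MulAut (Egrp n d),
      ∀ (i : ℕ), 1 ≤ i → i ≤ n - 1 → ∀ (h : i - 1 < n - 1) (x : Egrp n d),
        Φ (PresentedGroup.of (rels := braidRels (n - 1)) ⟨i - 1, h⟩) x =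
          betaTilde n d i x := by
  set f : Fin (n-1) → MulAut (Egrp n d) :=
    fun a => betaAut n d ((a:ℕ)+1) (by omega) (by have := a.isLt; omega) with hf
  have key : ∀ r ∈ braidRels (n-1), FreeGroup.lift f r = 1 := by
    rintro r (⟨a, b, hab, rfl⟩ | ⟨a, b, hab, rfl⟩)
    · rw [map_mul, map_inv, mul_inv_eq_one]
      simp only [map_mul, FreeGroup.lift_apply_of]
      refine MulEquiv.ext fun x => ?_
      simp only [MulAut.mul_apply, hf, betaAut_apply]
      have hb : (b : ℕ) + 1 = (a : ℕ) + 1 + 1 := by omega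
      rw [hb]
      exact DFunLike.congr_fun
        (braid_adj n d ((a:ℕ)+1) (by omega) (by have := b.isLt; omega)) x
    · rw [map_mul, map_inv, mul_inv_eq_one]
      simp only [map_mul, FreeGroup.lift_apply_of]
      refine MulEquiv.ext fun x => ?_
      simp only [MulAut.mul_apply, hf, betaAut_apply]
      exact DFunLike.congr_fun
        (braid_comm n d ((a:ℕ)+1) ((b:ℕ)+1) (by omega) (by omega)
          (by have := b.isLt; omega)) x
  refine ⟨PresentedGroup.toGroup key, fun i hi1 hi2 h x => ?_⟩
  rw [PresentedGroup.toGroup.of]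
  show betaTilde n d ((i-1)+1) x = betaTilde n d i x
  rw [show i - 1 + 1 = i by omega]
end

section
/- For each i with 1 ≤ i ≤ n−1, the endomorphism T_i of the free group F is bijective, i.e., T_i is an automorphism of F. -/
/-- The free group `F` on the `(d−1)(n−1)` generators `x_{i,j}`,
`i = 1,…,n−1`, `j = 1,…,d−1`. -/
abbrev Fgrp (n d : ℕ) : Type := FreeGroup (Fin (n - 1) × Fin (d - 1))

/-- The element `x_{k,j}` of `F`, with the second index read modulo `d`:
for `j ≡ 1,…,d−1 (mod d)` it is the corresponding generator, and for
`j ≡ 0 (mod d)` (i.e. `j = d`) it is `x_{k,d} := (x_{k,1}·x_{k,2}·…·x_{k,d−1})⁻¹`.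
(Junk value `1` outside the valid index ranges.) -/
def X (n d k j : ℕ) : Fgrp n d :=
  if hk : k - 1 < n - 1 then
    if j % d = 0 then
      ((List.ofFn fun b : Fin (d - 1) =>
        FreeGroup.of ((⟨k - 1, hk⟩ : Fin (n - 1)), b)).prod)⁻¹
    else if hj : j % d - 1 < d - 1 then
      FreeGroup.of ((⟨k - 1, hk⟩ : Fin (n - 1)), (⟨j % d - 1, hj⟩ : Fin (d - 1)))
    else 1
  else 1

/-- The element `y_{k,j} := x_{k,1}·x_{k,2}·…·x_{k,j−1}` of `F`. -/
def Y (n d k j : ℕ) : Fgrp n d :=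
  ((List.range (j - 1)).map fun t => X n d k (t + 1)).prod

/-- The endomorphism `T_i` of the free group `F`, defined on the generators
(with `1 ≤ k ≤ n−1`, `1 ≤ j ≤ d−1`) by
`x_{i−1,j} ↦ x_{i−1,j−1}⁻¹·…·x_{i−1,1}⁻¹·x_{i,j+1}·x_{i−1,1}·…·x_{i−1,j}`,
`x_{i,j} ↦ x_{i,2}·…·x_{i,j}·x_{i,j+1}⁻¹·x_{i,j}⁻¹·…·x_{i,2}⁻¹`,
`x_{i+1,j} ↦ x_{i,j−1}⁻¹·…·x_{i,1}⁻¹·x_{i+1,j}·x_{i,1}·…·x_{i,j}`,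
fixing all other generators. -/
def T (n d : ℕ) (i : ℕ) : Fgrp n d →* Fgrp n d :=
  FreeGroup.lift fun p =>
    let k := (p.1 : ℕ) + 1
    let j := (p.2 : ℕ) + 1
    if k + 1 = i then
      (Y n d k j)⁻¹ * X n d i (j + 1) * Y n d k (j + 1)
    else if k = i then
      (((List.range (j - 1)).map fun t => X n d i (t + 2)).prod) *
        (X n d i (j + 1))⁻¹ *
        (((List.range (j - 1)).map fun t => X n d i (t + 2)).prod)⁻¹
    else if k = i + 1 then
      (Y n d i j)⁻¹ * X n d k j * Y n d i (j + 1)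
    else
      FreeGroup.of p

namespace TAux

def Z (n d i j : ℕ) : Fgrp n d :=
  ((List.range (j - 1)).map fun t => X n d i (t + 2)).prod

theorem X_of {n d : ℕ} (k j : ℕ) (hk : k - 1 < n - 1) (hd : 2 ≤ d)
    (h1 : 1 ≤ j) (h2 : j ≤ d - 1) (hj : j - 1 < d - 1) :
    X n d k j = FreeGroup.of ((⟨k - 1, hk⟩ : Fin (n - 1)), (⟨j - 1, hj⟩ : Fin (d - 1))) := by
  have hmod : j % d = j := Nat.mod_eq_of_lt (by omega)
  unfold X
  rw [dif_pos hk]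
  simp only [hmod]
  rw [if_neg (by omega), dif_pos hj]

theorem Yd_ofFn {n d : ℕ} (k : ℕ) (hk : k - 1 < n - 1) (hd : 2 ≤ d) :
    (List.ofFn fun b : Fin (d - 1) =>
        FreeGroup.of ((⟨k - 1, hk⟩ : Fin (n - 1)), b)).prod = Y n d k d := by
  unfold Y
  rw [List.ofFn_eq_map, ← (show (List.finRange (d - 1)).map Fin.val = List.range (d - 1) from
    List.ext_getElem (by simp) (by simp)), List.map_map]
  have : d - 1 = d - 1 := rfl
  congr 1
  apply List.map_congr_left
  intro b _
  simp only [Function.comp]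
  rw [X_of (n := n) k ((b : ℕ) + 1) hk hd (by omega) (by omega) (by simpa using b.isLt)]
  simp

theorem X_zero {n d : ℕ} (k : ℕ) (hk : k - 1 < n - 1) (hd : 2 ≤ d) :
    X n d k 0 = (Y n d k d)⁻¹ := by
  unfold X
  rw [dif_pos hk, if_pos (by simp), Yd_ofFn k hk hd]

theorem X_d {n d : ℕ} (k : ℕ) (hk : k - 1 < n - 1) (hd : 2 ≤ d) :
    X n d k d = (Y n d k d)⁻¹ := by
  unfold X
  rw [dif_pos hk, if_pos (Nat.mod_self d), Yd_ofFn k hk hd]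

theorem Y_succ {n d : ℕ} (k m : ℕ) (hm : 1 ≤ m) :
    Y n d k (m + 1) = Y n d k m * X n d k m := by
  unfold Y
  have h : m + 1 - 1 = (m - 1) + 1 := by omega
  rw [h, List.range_succ, List.map_append, List.prod_append]
  have h2 : m - 1 + 1 = m := by omega
  simp [h2]

theorem Z_succ {n d i : ℕ} (m : ℕ) (hm : 1 ≤ m) :
    Z n d i (m + 1) = Z n d i m * X n d i (m + 1) := by
  unfold Z
  have h : m + 1 - 1 = (m - 1) + 1 := by omega
  rw [h, List.range_succ, List.map_append, List.prod_append]
  have h2 : m - 1 + 2 = m + 1 := by omega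
  simp [h2]

theorem Y_zero {n d k : ℕ} : Y n d k 0 = 1 := by simp [Y]
theorem Y_one {n d k : ℕ} : Y n d k 1 = 1 := by simp [Y]
theorem Z_zero {n d i : ℕ} : Z n d i 0 = 1 := by simp [Z]
theorem Z_one {n d i : ℕ} : Z n d i 1 = 1 := by simp [Z]

theorem Z_d {n d i : ℕ} (hd : 2 ≤ d) (hik : i - 1 < n - 1) :
    Z n d i d = (X n d i 1)⁻¹ := by
  have h1 : Y n d i (d + 1) = 1 := by
    rw [Y_succ i d (by omega), X_d i hik hd, mul_inv_cancel]
  have h2 : Y n d i (d + 1) = X n d i 1 * Z n d i d := by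
    unfold Y Z
    have h : d + 1 - 1 = (d - 1) + 1 := by omega
    rw [h, List.range_succ_eq_map, List.map_cons, List.prod_cons, List.map_map]
    congr 1
  rw [h2] at h1
  symm
  exact inv_eq_of_mul_eq_one_right h1

end TAux

namespace TAux

theorem T_of {n d i : ℕ} (p : Fin (n - 1) × Fin (d - 1)) :
    T n d i (FreeGroup.of p) =
      (if (p.1 : ℕ) + 1 + 1 = i then
        (Y n d ((p.1 : ℕ) + 1) ((p.2 : ℕ) + 1))⁻¹ * X n d i ((p.2 : ℕ) + 1 + 1) *
          Y n d ((p.1 : ℕ) + 1) ((p.2 : ℕ) + 1 + 1)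
      else if (p.1 : ℕ) + 1 = i then
        Z n d i ((p.2 : ℕ) + 1) * (X n d i ((p.2 : ℕ) + 1 + 1))⁻¹ *
          (Z n d i ((p.2 : ℕ) + 1))⁻¹
      else if (p.1 : ℕ) + 1 = i + 1 then
        (Y n d i ((p.2 : ℕ) + 1))⁻¹ * X n d ((p.1 : ℕ) + 1) ((p.2 : ℕ) + 1) *
          Y n d i ((p.2 : ℕ) + 1 + 1)
      else FreeGroup.of p) := by
  show FreeGroup.lift _ (FreeGroup.of p) = _
  rw [FreeGroup.lift_apply_of]
  rfl

theorem TX_b {n d i : ℕ} (hd : 2 ≤ d) (hik : i - 1 < n - 1) (hi1 : 1 ≤ i)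
    (j : ℕ) (h1 : 1 ≤ j) (h2 : j ≤ d - 1) :
    T n d i (X n d i j) = Z n d i j * (X n d i (j + 1))⁻¹ * (Z n d i j)⁻¹ := by
  rw [X_of i j hik hd h1 h2 (by omega), T_of]
  simp only [Fin.val_mk]
  rw [if_neg (by omega), if_pos (by omega)]
  have hj : j - 1 + 1 = j := by omega
  simp only [hj]

theorem TY_b {n d i : ℕ} (hd : 2 ≤ d) (hik : i - 1 < n - 1) (hi1 : 1 ≤ i) :
    ∀ m, m ≤ d → T n d i (Y n d i m) = (Z n d i m)⁻¹ := by
  intro m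
  induction m with
  | zero => intro _; rw [Y_zero, Z_zero, map_one]; simp
  | succ m ih =>
    intro hmd
    rcases Nat.eq_zero_or_pos m with hm | hm
    · subst hm; rw [Y_one, Z_one, map_one]; simp
    · rw [Y_succ i m hm, map_mul, ih (by omega),
        TX_b hd hik hi1 m hm (by omega), Z_succ m hm]
      group

end TAux

namespace TAux

/-- preimage of `x_{i,m}` -/
def sB (n d i m : ℕ) : Fgrp n d :=
  Y n d i (m - 1) * (X n d i (m - 1))⁻¹ * (Y n d i (m - 1))⁻¹

/-- preimage of `y_{i,m}` -/
def A (n d i m : ℕ) : Fgrp n d :=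
  ((List.range (m - 1)).map fun t => sB n d i (t + 1)).prod

theorem A_succ {n d i : ℕ} (m : ℕ) (hm : 1 ≤ m) :
    A n d i (m + 1) = A n d i m * sB n d i m := by
  unfold A
  have h : m + 1 - 1 = (m - 1) + 1 := by omega
  rw [h, List.range_succ, List.map_append, List.prod_append]
  have h2 : m - 1 + 1 = m := by omega
  simp [h2]

theorem TYd {n d i : ℕ} (hd : 2 ≤ d) (hik : i - 1 < n - 1) (hi1 : 1 ≤ i) :
    T n d i (Y n d i d) = X n d i 1 := by
  rw [TY_b hd hik hi1 d le_rfl, Z_d hd hik, inv_inv]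

theorem TsB {n d i : ℕ} (hd : 2 ≤ d) (hik : i - 1 < n - 1) (hi1 : 1 ≤ i)
    (m : ℕ) (h1 : 1 ≤ m) (h2 : m ≤ d - 1) :
    T n d i (sB n d i m) = X n d i m := by
  unfold sB
  rcases Nat.eq_or_lt_of_le h1 with hm | hm
  · -- m = 1
    subst hm
    have h0 : (1:ℕ) - 1 = 0 := rfl
    rw [h0, Y_zero, X_zero i hik hd]
    simpa using TYd hd hik hi1
  · have hm2 : 2 ≤ m := hm
    rw [map_mul, map_mul, map_inv, map_inv, TY_b hd hik hi1 (m - 1) (by omega),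
      TX_b hd hik hi1 (m - 1) (by omega) (by omega)]
    have h3 : m - 1 + 1 = m := by omega
    rw [h3]
    group

theorem TA {n d i : ℕ} (hd : 2 ≤ d) (hik : i - 1 < n - 1) (hi1 : 1 ≤ i) :
    ∀ m, m ≤ d → T n d i (A n d i m) = Y n d i m := by
  intro m
  induction m with
  | zero => intro _; simp [A, Y_zero]
  | succ m ih =>
    intro hmd
    rcases Nat.eq_zero_or_pos m with hm | hm
    · subst hm; simp [A, Y_one]
    · rw [A_succ m hm, map_mul, ih (by omega), TsB hd hik hi1 m hm (by omega),
        ← Y_succ i m hm]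

end TAux

namespace TAux

theorem TX_a {n d i : ℕ} (hd : 2 ≤ d) (hi2 : 2 ≤ i) (hik : i - 2 < n - 1)
    (j : ℕ) (h1 : 1 ≤ j) (h2 : j ≤ d - 1) :
    T n d i (X n d (i - 1) j) =
      (Y n d (i - 1) j)⁻¹ * X n d i (j + 1) * Y n d (i - 1) (j + 1) := by
  have hik' : i - 1 - 1 < n - 1 := by omega
  rw [X_of (i - 1) j hik' hd h1 h2 (by omega), T_of]
  simp only [Fin.val_mk]
  rw [if_pos (by omega)]
  have e1 : i - 1 - 1 + 1 = i - 1 := by omega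
  have e2 : j - 1 + 1 = j := by omega
  simp only [e1, e2]

theorem TX_c {n d i : ℕ} (hd : 2 ≤ d) (hi1 : 1 ≤ i) (hik : i + 1 - 1 < n - 1)
    (j : ℕ) (h1 : 1 ≤ j) (h2 : j ≤ d - 1) :
    T n d i (X n d (i + 1) j) =
      (Y n d i j)⁻¹ * X n d (i + 1) j * Y n d i (j + 1) := by
  rw [X_of (i + 1) j hik hd h1 h2 (by omega), T_of]
  simp only [Fin.val_mk]
  rw [if_neg (by omega), if_neg (by omega), if_pos (by omega)]
  have e1 : i + 1 - 1 + 1 = i + 1 := by omega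
  have e2 : j - 1 + 1 = j := by omega
  simp only [e1, e2]
  rw [X_of (i + 1) j hik hd h1 h2 (by omega)]

theorem TV {n d i : ℕ} (hd : 2 ≤ d) (hi2 : 2 ≤ i) (hik : i - 2 < n - 1) :
    ∀ m, m ≤ d → T n d i (Y n d (i - 1) m) = Z n d i m * Y n d (i - 1) m := by
  intro m
  induction m with
  | zero => intro _; rw [Y_zero, Z_zero, map_one]; simp
  | succ m ih =>
    intro hmd
    rcases Nat.eq_zero_or_pos m with hm | hm
    · subst hm; rw [Y_one, Z_one, map_one]; simp
    · rw [Y_succ (i - 1) m hm, map_mul, ih (by omega),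
        TX_a hd hi2 hik m hm (by omega), Z_succ m hm, Y_succ (i - 1) m hm]
      group

/-- The candidate inverse of `T n d i`. -/
def S (n d : ℕ) (i : ℕ) : Fgrp n d →* Fgrp n d :=
  FreeGroup.lift fun p =>
    let k := (p.1 : ℕ) + 1
    let j := (p.2 : ℕ) + 1
    if k + 1 = i then
      (Y n d k j)⁻¹ * X n d i j * Y n d k j * FreeGroup.of p
    else if k = i then
      sB n d i j
    else if k = i + 1 then
      A n d i j * FreeGroup.of p * (A n d i (j + 1))⁻¹
    else
      FreeGroup.of p

theorem S_of {n d i : ℕ} (p : Fin (n - 1) × Fin (d - 1)) :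
    S n d i (FreeGroup.of p) =
      (if (p.1 : ℕ) + 1 + 1 = i then
        (Y n d ((p.1 : ℕ) + 1) ((p.2 : ℕ) + 1))⁻¹ * X n d i ((p.2 : ℕ) + 1) *
          Y n d ((p.1 : ℕ) + 1) ((p.2 : ℕ) + 1) * FreeGroup.of p
      else if (p.1 : ℕ) + 1 = i then
        sB n d i ((p.2 : ℕ) + 1)
      else if (p.1 : ℕ) + 1 = i + 1 then
        A n d i ((p.2 : ℕ) + 1) * FreeGroup.of p * (A n d i ((p.2 : ℕ) + 1 + 1))⁻¹
      else FreeGroup.of p) := by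
  show FreeGroup.lift _ (FreeGroup.of p) = _
  rw [FreeGroup.lift_apply_of]

end TAux

namespace TAux

theorem X_p {n d : ℕ} (hd : 2 ≤ d) (p : Fin (n - 1) × Fin (d - 1)) :
    X n d ((p.1 : ℕ) + 1) ((p.2 : ℕ) + 1) = FreeGroup.of p := by
  have h1 := p.1.isLt
  have h2 := p.2.isLt
  rw [X_of _ _ (by omega) hd (by omega) (by omega) (by omega)]
  have e1 : (p.1 : ℕ) + 1 - 1 = (p.1 : ℕ) := by omega
  have e2 : (p.2 : ℕ) + 1 - 1 = (p.2 : ℕ) := by omega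
  simp only [e1, e2, Fin.eta]

theorem TS_of {n d i : ℕ} (hn : 2 ≤ n) (hd : 2 ≤ d) (hi1 : 1 ≤ i) (hi2 : i ≤ n - 1)
    (p : Fin (n - 1) × Fin (d - 1)) :
    T n d i (S n d i (FreeGroup.of p)) = FreeGroup.of p := by
  have hp1 := p.1.isLt
  have hp2 := p.2.isLt
  have hik : i - 1 < n - 1 := by omega
  have hj1 : 1 ≤ (p.2 : ℕ) + 1 := by omega
  have hj2 : (p.2 : ℕ) + 1 ≤ d - 1 := by omega
  rw [S_of]
  by_cases h1 : (p.1 : ℕ) + 1 + 1 = i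
  · -- row i - 1
    have hii : 2 ≤ i := by omega
    have hik2 : i - 2 < n - 1 := by omega
    have hP : X n d (i - 1) ((p.2 : ℕ) + 1) = FreeGroup.of p := by
      rw [show i - 1 = (p.1 : ℕ) + 1 by omega, X_p hd p]
    rw [if_pos h1, show (p.1 : ℕ) + 1 = i - 1 by omega]
    simp only [map_mul, map_inv]
    rw [TV hd hii hik2 _ (by omega), TX_b hd hik hi1 _ hj1 hj2, T_of, if_pos h1,
      show (p.1 : ℕ) + 1 = i - 1 by omega,
      Y_succ (i - 1) ((p.2 : ℕ) + 1) hj1, hP]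
    group
  · by_cases h2 : (p.1 : ℕ) + 1 = i
    · -- row i
      rw [if_neg h1, if_pos h2, TsB hd hik hi1 _ hj1 hj2,
        show i = (p.1 : ℕ) + 1 from h2.symm, X_p hd p]
    · by_cases h3 : (p.1 : ℕ) + 1 = i + 1
      · -- row i + 1
        have hik3 : i + 1 - 1 < n - 1 := by omega
        rw [if_neg h1, if_neg h2, if_pos h3]
        simp only [map_mul, map_inv]
        rw [TA hd hik hi1 _ (by omega), TA hd hik hi1 _ (by omega), T_of,
          if_neg h1, if_neg h2, if_pos h3, X_p hd p]
        group
      · rw [if_neg h1, if_neg h2, if_neg h3, T_of, if_neg h1, if_neg h2, if_neg h3]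

theorem TS_apply {n d i : ℕ} (hn : 2 ≤ n) (hd : 2 ≤ d) (hi1 : 1 ≤ i) (hi2 : i ≤ n - 1)
    (x : Fgrp n d) : T n d i (S n d i x) = x := by
  have h : (T n d i).comp (S n d i) = MonoidHom.id (Fgrp n d) :=
    FreeGroup.ext_hom _ _ fun p => by
      simpa using TS_of hn hd hi1 hi2 p
  calc T n d i (S n d i x) = ((T n d i).comp (S n d i)) x := rfl
    _ = x := by rw [h]; rfl

end TAux

namespace TAux

theorem prod_range_mem {n d : ℕ} (H : Subgroup (Fgrp n d)) (f : ℕ → Fgrp n d) :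
    ∀ m, (∀ t, t < m → f t ∈ H) → ((List.range m).map f).prod ∈ H := by
  intro m
  induction m with
  | zero => intro _; simp
  | succ m ih =>
    intro h
    rw [List.range_succ, List.map_append, List.prod_append]
    simp only [List.map_cons, List.map_nil, List.prod_cons, List.prod_nil, mul_one]
    exact H.mul_mem (ih fun t ht => h t (by omega)) (h m (by omega))

theorem Y_mem {n d : ℕ} (H : Subgroup (Fgrp n d)) (k m : ℕ)
    (h : ∀ l, 1 ≤ l → l < m → X n d k l ∈ H) : Y n d k m ∈ H :=
  prod_range_mem H _ _ fun t ht => h (t + 1) (by omega) (by omega)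

theorem A_mem {n d i : ℕ} (H : Subgroup (Fgrp n d)) (m : ℕ)
    (h : ∀ l, 1 ≤ l → l < m → sB n d i l ∈ H) : A n d i m ∈ H :=
  prod_range_mem H _ _ fun t ht => h (t + 1) (by omega) (by omega)

theorem SX_b {n d i : ℕ} (hd : 2 ≤ d) (hik : i - 1 < n - 1) (hi1 : 1 ≤ i)
    (j : ℕ) (h1 : 1 ≤ j) (h2 : j ≤ d - 1) :
    S n d i (X n d i j) = sB n d i j := by
  rw [X_of i j hik hd h1 h2 (by omega), S_of]
  simp only [Fin.val_mk]
  rw [if_neg (by omega), if_pos (by omega), show j - 1 + 1 = j by omega]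

theorem SX_a {n d i : ℕ} (hd : 2 ≤ d) (hi2 : 2 ≤ i) (hik : i - 2 < n - 1)
    (j : ℕ) (h1 : 1 ≤ j) (h2 : j ≤ d - 1) :
    S n d i (X n d (i - 1) j) =
      (Y n d (i - 1) j)⁻¹ * X n d i j * Y n d (i - 1) j * X n d (i - 1) j := by
  have hik' : i - 1 - 1 < n - 1 := by omega
  rw [X_of (i - 1) j hik' hd h1 h2 (by omega), S_of]
  simp only [Fin.val_mk]
  rw [if_pos (by omega), show i - 1 - 1 + 1 = i - 1 by omega, show j - 1 + 1 = j by omega,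
    ← X_of (i - 1) j hik' hd h1 h2 (by omega)]

theorem S_range_top {n d i : ℕ} (hn : 2 ≤ n) (hd : 2 ≤ d) (hi1 : 1 ≤ i) (hi2 : i ≤ n - 1) :
    Function.Surjective (S n d i) := by
  set R := (S n d i).range with hR
  have hik : i - 1 < n - 1 := by omega
  -- generators of row i (partial)
  have core : ∀ m, m ≤ d - 2 → 1 ≤ m → X n d i m ∈ R := by
    intro m
    induction m using Nat.strong_induction_on with
    | _ m ih =>
      intro hm2 hm1
      have hY : Y n d i m ∈ R := Y_mem R i m fun l hl1 hl2 => ih l hl2 (by omega) hl1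
      have hs : sB n d i (m + 1) ∈ R := by
        rw [← SX_b hd hik hi1 (m + 1) (by omega) (by omega)]
        exact ⟨_, rfl⟩
      unfold sB at hs
      rw [show m + 1 - 1 = m by omega] at hs
      have key : X n d i m =
          ((Y n d i m)⁻¹ * (Y n d i m * (X n d i m)⁻¹ * (Y n d i m)⁻¹) * Y n d i m)⁻¹ := by
        group
      rw [key]
      exact R.inv_mem (R.mul_mem (R.mul_mem (R.inv_mem hY) hs) hY)
  have hYd : Y n d i d ∈ R := by
    have hs : sB n d i 1 ∈ R := by
      rw [← SX_b hd hik hi1 1 le_rfl (by omega)]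
      exact ⟨_, rfl⟩
    unfold sB at hs
    rw [show (1 : ℕ) - 1 = 0 from rfl, Y_zero, X_zero i hik hd] at hs
    simpa using hs
  have bmem : ∀ m, 1 ≤ m → m ≤ d - 1 → X n d i m ∈ R := by
    intro m hm1 hm2
    rcases Nat.lt_or_ge m (d - 1) with hm | hm
    · exact core m (by omega) hm1
    · have hmd : m = d - 1 := by omega
      subst hmd
      have hYd1 : Y n d i (d - 1) ∈ R :=
        Y_mem R i (d - 1) fun l hl1 hl2 => core l (by omega) hl1
      have hsplit : Y n d i d = Y n d i (d - 1) * X n d i (d - 1) := by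
        rw [← Y_succ i (d - 1) (by omega), show d - 1 + 1 = d by omega]
      have key : X n d i (d - 1) = (Y n d i (d - 1))⁻¹ * Y n d i d := by
        rw [hsplit]; group
      rw [key]
      exact R.mul_mem (R.inv_mem hYd1) hYd
  have Ymem : ∀ m, m ≤ d → Y n d i m ∈ R := fun m hm =>
    Y_mem R i m fun l hl1 hl2 => bmem l hl1 (by omega)
  have X0mem : X n d i 0 ∈ R := by
    rw [X_zero i hik hd]; exact R.inv_mem hYd
  have sBmem : ∀ m, 1 ≤ m → m ≤ d → sB n d i m ∈ R := by
    intro m hm1 hm2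
    have hXm : X n d i (m - 1) ∈ R := by
      rcases Nat.eq_zero_or_pos (m - 1) with h | h
      · rw [h]; exact X0mem
      · exact bmem (m - 1) h (by omega)
    have hYm : Y n d i (m - 1) ∈ R := Ymem (m - 1) (by omega)
    exact R.mul_mem (R.mul_mem hYm (R.inv_mem hXm)) (R.inv_mem hYm)
  have Amem : ∀ m, m ≤ d + 1 → A n d i m ∈ R := fun m hm =>
    A_mem R m fun l hl1 hl2 => sBmem l hl1 (by omega)
  -- all generators are in the range
  have main : ∀ p : Fin (n - 1) × Fin (d - 1), FreeGroup.of p ∈ R := by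
    intro p
    have hp1 := p.1.isLt
    have hp2 := p.2.isLt
    have hj1 : 1 ≤ (p.2 : ℕ) + 1 := by omega
    have hj2 : (p.2 : ℕ) + 1 ≤ d - 1 := by omega
    by_cases h1 : (p.1 : ℕ) + 1 + 1 = i
    · -- row i - 1, by induction on the column
      have hii : 2 ≤ i := by omega
      have hik2 : i - 2 < n - 1 := by omega
      have amem : ∀ m, 1 ≤ m → m ≤ d - 1 → X n d (i - 1) m ∈ R := by
        intro m
        induction m using Nat.strong_induction_on with
        | _ m ih =>
          intro hm1 hm2
          have hV : Y n d (i - 1) m ∈ R :=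
            Y_mem R (i - 1) m fun l hl1 hl2 => ih l hl2 hl1 (by omega)
          have hs : S n d i (X n d (i - 1) m) ∈ R := ⟨_, rfl⟩
          rw [SX_a hd hii hik2 m hm1 hm2] at hs
          have hB : X n d i m ∈ R := bmem m hm1 hm2
          have key : X n d (i - 1) m =
              (Y n d (i - 1) m)⁻¹ * (X n d i m)⁻¹ * Y n d (i - 1) m *
                ((Y n d (i - 1) m)⁻¹ * X n d i m * Y n d (i - 1) m * X n d (i - 1) m) := by
            group
          rw [key]
          exact R.mul_mem (R.mul_mem (R.mul_mem
            (R.inv_mem hV) (R.inv_mem hB)) hV) hs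
      have := amem ((p.2 : ℕ) + 1) hj1 hj2
      rwa [show i - 1 = (p.1 : ℕ) + 1 by omega, X_p hd p] at this
    · by_cases h2 : (p.1 : ℕ) + 1 = i
      · have := bmem ((p.2 : ℕ) + 1) hj1 hj2
        rwa [show i = (p.1 : ℕ) + 1 from h2.symm, X_p hd p] at this
      · by_cases h3 : (p.1 : ℕ) + 1 = i + 1
        · have hs : S n d i (FreeGroup.of p) ∈ R := ⟨_, rfl⟩
          rw [S_of, if_neg h1, if_neg h2, if_pos h3] at hs
          have key : FreeGroup.of p =
              (A n d i ((p.2 : ℕ) + 1))⁻¹ *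
                (A n d i ((p.2 : ℕ) + 1) * FreeGroup.of p *
                  (A n d i ((p.2 : ℕ) + 1 + 1))⁻¹) *
                A n d i ((p.2 : ℕ) + 1 + 1) := by group
          rw [key]
          exact R.mul_mem (R.mul_mem (R.inv_mem (Amem _ (by omega))) hs)
            (Amem _ (by omega))
        · have hs : S n d i (FreeGroup.of p) ∈ R := ⟨_, rfl⟩
          rwa [S_of, if_neg h1, if_neg h2, if_neg h3] at hs
  have htop : (S n d i).range = ⊤ := by
    rw [← top_le_iff] at *
    rw [← FreeGroup.closure_range_of]
    exact (Subgroup.closure_le _).2 (by rintro _ ⟨p, rfl⟩; exact main p)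
  exact MonoidHom.range_eq_top.1 htop

end TAux


/-- For each `i` with `1 ≤ i ≤ n−1`, the endomorphism `T_i` of the free group
`F` is bijective, i.e. `T_i` is an automorphism of `F`. -/
theorem T_bijective (n d : ℕ) (hn : 2 ≤ n) (hd : 2 ≤ d)
    (i : ℕ) (hi1 : 1 ≤ i) (hi2 : i ≤ n - 1) :
    Function.Bijective (T n d i) := by
  have hsurj := TAux.S_range_top hn hd hi1 hi2
  constructor
  · intro a b hab
    obtain ⟨a', rfl⟩ := hsurj a
    obtain ⟨b', rfl⟩ := hsurj b
    rw [TAux.TS_apply hn hd hi1 hi2, TAux.TS_apply hn hd hi1 hi2] at hab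
    rw [hab]
  · intro y
    exact ⟨TAux.S n d i y, TAux.TS_apply hn hd hi1 hi2 y⟩
end

section
/- The endomorphisms T_i satisfy the braid relation: for each i with 1 ≤ i ≤ n−2, T_i ∘ T_{i+1} ∘ T_i = T_{i+1} ∘ T_i ∘ T_{i+1} as endomorphisms of F. -/
section Aux
variable (n d : ℕ)

theorem X_one {k : ℕ} (hk : ¬ k - 1 < n - 1) (j : ℕ) : X n d k j = 1 := by
  simp [X, hk]

theorem X_of (hd : 2 ≤ d) {k j : ℕ} (hk : k - 1 < n - 1) (hj0 : j ≠ 0) (hj : j ≤ d - 1) :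
    X n d k j = FreeGroup.of ((⟨k - 1, hk⟩ : Fin (n - 1)), (⟨j - 1, by omega⟩ : Fin (d - 1))) := by
  have hjd : j % d = j := Nat.mod_eq_of_lt (by omega)
  unfold X
  simp only [hjd]
  rw [dif_pos hk, if_neg hj0, dif_pos (by omega)]

theorem X_per (k j : ℕ) : X n d k (j + d) = X n d k j := by
  simp [X, Nat.add_mod_right]

theorem Y_one (k : ℕ) : Y n d k 1 = 1 := by simp [Y]

theorem Y_succ (k : ℕ) {j : ℕ} (hj : j ≠ 0) :
    Y n d k (j + 1) = Y n d k j * X n d k j := by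
  unfold Y
  rw [show j + 1 - 1 = (j - 1) + 1 from by omega, List.range_succ, List.map_append,
    List.prod_append, List.map_singleton, List.prod_singleton,
    show j - 1 + 1 = j from by omega]

theorem Y_row_one {k : ℕ} (hk : ¬ k - 1 < n - 1) (j : ℕ) : Y n d k j = 1 := by
  unfold Y
  apply List.prod_eq_one
  intro x hx
  simp only [List.mem_map] at hx
  obtain ⟨t, _, rfl⟩ := hx
  exact X_one n d hk _

theorem Y_d (hd : 2 ≤ d) {k : ℕ} (hk : k - 1 < n - 1) :
    Y n d k d = (List.ofFn fun b : Fin (d - 1) =>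
      FreeGroup.of ((⟨k - 1, hk⟩ : Fin (n - 1)), b)).prod := by
  unfold Y
  congr 1
  apply List.ext_getElem
  · simp
  · intro t h1 h2
    simp only [List.getElem_map, List.getElem_range, List.getElem_ofFn]
    simp only [List.length_map, List.length_range] at h1
    rw [X_of n d hd hk (by omega) (by omega)]
    rfl

theorem Y_wrap (hd : 2 ≤ d) (k : ℕ) : Y n d k (d + 1) = 1 := by
  by_cases hk : k - 1 < n - 1
  · rw [Y_succ n d k (by omega), Y_d n d hd hk]
    conv_lhs => rw [show X n d k d = ((List.ofFn fun b : Fin (d - 1) =>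
      FreeGroup.of ((⟨k - 1, hk⟩ : Fin (n - 1)), b)).prod)⁻¹ from by
        unfold X; rw [dif_pos hk, if_pos (Nat.mod_self d)]]
    group
  · exact Y_row_one n d hk _

theorem Y_per (hd : 2 ≤ d) (k : ℕ) : ∀ {j : ℕ}, j ≠ 0 → Y n d k (j + d) = Y n d k j := by
  intro j hj
  induction j with
  | zero => exact absurd rfl hj
  | succ m ih =>
    rcases Nat.eq_zero_or_pos m with rfl | hm
    · rw [show 0 + 1 + d = d + 1 from by omega, Y_wrap n d hd, show (0:ℕ) + 1 = 1 from rfl, Y_one]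
    · rw [show m + 1 + d = (m + d) + 1 from by omega, Y_succ n d k (by omega), X_per,
        ih (by omega), ← Y_succ n d k (by omega)]

theorem X_Y (k : ℕ) {j : ℕ} (hj : j ≠ 0) :
    X n d k j = (Y n d k j)⁻¹ * Y n d k (j + 1) := by
  rw [Y_succ n d k hj]; group

theorem prod_shift (k m : ℕ) : ((List.range m).map fun t => X n d k (t + 2)).prod
    = (Y n d k 2)⁻¹ * Y n d k (m + 2) := by
  induction m with
  | zero => simp
  | succ m ih =>
    rw [List.range_succ, List.map_append, List.prod_append, List.map_singleton,
      List.prod_singleton, ih, show m + 1 + 2 = (m + 2) + 1 from rfl,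
      Y_succ n d k (j := m + 2) (by omega)]
    group

end Aux

section TX
variable (n d : ℕ)

theorem T_of_fix (i : ℕ) (a : Fin (n - 1) × Fin (d - 1)) (h1 : (a.1 : ℕ) + 1 + 1 ≠ i)
    (h2 : (a.1 : ℕ) + 1 ≠ i) (h3 : (a.1 : ℕ) + 1 ≠ i + 1) :
    T n d i (FreeGroup.of a) = FreeGroup.of a := by
  unfold T
  rw [FreeGroup.lift_apply_of]
  dsimp only
  rw [if_neg h1, if_neg h2, if_neg h3]

theorem T_X_p (hd : 2 ≤ d) (k : ℕ) {j : ℕ} (hk0 : k ≠ 0) (hk : k - 1 < n - 1)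
    (hj0 : j ≠ 0) (hj : j ≤ d - 1) :
    T n d (k + 1) (X n d k j) =
      (Y n d k j)⁻¹ * X n d (k + 1) (j + 1) * Y n d k (j + 1) := by
  rw [X_of n d hd hk hj0 hj]
  unfold T
  rw [FreeGroup.lift_apply_of]
  dsimp only
  rw [if_pos (by omega : k - 1 + 1 + 1 = k + 1)]
  rw [show k - 1 + 1 = k from by omega, show j - 1 + 1 = j from by omega]

theorem T_X_q (hd : 2 ≤ d) (i : ℕ) {j : ℕ} (hi : i ≠ 0) (hrow : i - 1 < n - 1)
    (hj0 : j ≠ 0) (hj : j ≤ d - 1) :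
    T n d i (X n d i j) =
      (Y n d i 2)⁻¹ * Y n d i (j + 1) * (X n d i (j + 1))⁻¹ *
        (Y n d i (j + 1))⁻¹ * Y n d i 2 := by
  rw [X_of n d hd hrow hj0 hj]
  unfold T
  rw [FreeGroup.lift_apply_of]
  dsimp only
  rw [if_neg (by omega), if_pos (by omega : i - 1 + 1 = i)]
  rw [show j - 1 + 1 - 1 = j - 1 from by omega, show j - 1 + 1 + 1 = j + 1 from by omega,
    prod_shift, show j - 1 + 2 = j + 1 from by omega]
  group

theorem T_X_r (hd : 2 ≤ d) (i : ℕ) {j : ℕ} (hrow : i < n - 1)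
    (hj0 : j ≠ 0) (hj : j ≤ d - 1) :
    T n d i (X n d (i + 1) j) =
      (Y n d i j)⁻¹ * X n d (i + 1) j * Y n d i (j + 1) := by
  rw [X_of n d hd (by omega : i + 1 - 1 < n - 1) hj0 hj]
  unfold T
  rw [FreeGroup.lift_apply_of]
  dsimp only
  rw [if_neg (by omega), if_neg (by omega), if_pos (by omega : i + 1 - 1 + 1 = i + 1)]
  rw [show i + 1 - 1 + 1 = i + 1 from by omega, show j - 1 + 1 = j from by omega,
    ← X_of n d hd (by omega : i + 1 - 1 < n - 1) hj0 hj]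

theorem T_X_fix (i k : ℕ) (hk0 : k ≠ 0) (h1 : k + 1 ≠ i) (h2 : k ≠ i) (h3 : k ≠ i + 1) :
    ∀ j, T n d i (X n d k j) = X n d k j := by
  intro j
  by_cases hk : k - 1 < n - 1
  · unfold X
    rw [dif_pos hk]
    split_ifs with hm hv
    · rw [map_inv]
      congr 1
      rw [map_list_prod, List.map_ofFn]
      refine congrArg List.prod (congrArg List.ofFn (funext fun b => ?_))
      exact T_of_fix n d i (⟨k - 1, hk⟩, b) (show k - 1 + 1 + 1 ≠ i from by omega)
        (show k - 1 + 1 ≠ i from by omega) (show k - 1 + 1 ≠ i + 1 from by omega)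
    · exact T_of_fix n d i _ (show k - 1 + 1 + 1 ≠ i from by omega)
        (show k - 1 + 1 ≠ i from by omega) (show k - 1 + 1 ≠ i + 1 from by omega)
    · exact map_one _
  · rw [X_one n d hk, map_one]

theorem T_Y_fix (i k : ℕ) (hk0 : k ≠ 0) (h1 : k + 1 ≠ i) (h2 : k ≠ i) (h3 : k ≠ i + 1) :
    ∀ j, T n d i (Y n d k j) = Y n d k j := by
  intro j
  unfold Y
  rw [map_list_prod, List.map_map]
  congr 1
  apply List.map_congr_left
  intro t _
  exact T_X_fix n d i k hk0 h1 h2 h3 (t + 1)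

end TX

section TY
variable (n d : ℕ)

theorem extend_periodic {d : ℕ} {P : ℕ → Prop} (hd : 0 < d)
    (base : ∀ j, j ≠ 0 → j ≤ d → P j)
    (per : ∀ j, j ≠ 0 → P j → P (j + d)) : ∀ j, j ≠ 0 → P j := by
  intro j
  induction j using Nat.strong_induction_on with
  | _ j ih =>
    intro hj
    by_cases hjd : j ≤ d
    · exact base j hj hjd
    · have h := per (j - d) (by omega) (ih (j - d) (by omega) (by omega))
      rwa [Nat.sub_add_cancel (by omega)] at h

theorem T_Y_q (hd : 2 ≤ d) (i : ℕ) (hi : i ≠ 0) (hrow : i - 1 < n - 1) :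
    ∀ j, j ≠ 0 → T n d i (Y n d i j) = (Y n d i (j + 1))⁻¹ * Y n d i 2 := by
  refine extend_periodic (d := d) (by omega) ?_ ?_
  · intro j
    induction j with
    | zero => intro h; exact absurd rfl h
    | succ m ih =>
      intro _ hmd
      rcases Nat.eq_zero_or_pos m with rfl | hm
      · simp [Y_one]
      · rw [Y_succ n d i (j := m) (by omega), map_mul, ih (by omega) (by omega),
          T_X_q n d hd i hi hrow (by omega) (by omega),
          show Y n d i (m + 1 + 1) = Y n d i (m + 1) * X n d i (m + 1) from
            Y_succ n d i (by omega)]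
        group
  · intro j hj h
    rw [Y_per n d hd i hj, show j + d + 1 = (j + 1) + d from by omega,
      Y_per n d hd i (by omega)]
    exact h

theorem T_Y_r (hd : 2 ≤ d) (i : ℕ) (hrow : i < n - 1) :
    ∀ j, j ≠ 0 → T n d i (Y n d (i + 1) j) = Y n d (i + 1) j * Y n d i j := by
  refine extend_periodic (d := d) (by omega) ?_ ?_
  · intro j
    induction j with
    | zero => intro h; exact absurd rfl h
    | succ m ih =>
      intro _ hmd
      rcases Nat.eq_zero_or_pos m with rfl | hm
      · simp [Y_one]
      · rw [Y_succ n d (i + 1) (j := m) (by omega), map_mul, ih (by omega) (by omega),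
          T_X_r n d hd i hrow (by omega) (by omega)]
        group
  · intro j hj h
    rw [Y_per n d hd (i + 1) hj, Y_per n d hd i hj]
    exact h

theorem T_Y_p (hd : 2 ≤ d) (k : ℕ) (hk0 : k ≠ 0) (hrow : k - 1 < n - 1) :
    ∀ j, j ≠ 0 → T n d (k + 1) (Y n d k j) =
      (Y n d (k + 1) 2)⁻¹ * Y n d (k + 1) (j + 1) * Y n d k j := by
  refine extend_periodic (d := d) (by omega) ?_ ?_
  · intro j
    induction j with
    | zero => intro h; exact absurd rfl h
    | succ m ih =>
      intro _ hmd
      rcases Nat.eq_zero_or_pos m with rfl | hm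
      · simp [Y_one]
      · rw [Y_succ n d k (j := m) (by omega), map_mul, ih (by omega) (by omega),
          T_X_p n d hd k hk0 hrow (by omega) (by omega),
          show Y n d (k + 1) (m + 1 + 1) = Y n d (k + 1) (m + 1) * X n d (k + 1) (m + 1) from
            Y_succ n d (k + 1) (by omega),
          show Y n d k (m + 1) = Y n d k m * X n d k m from Y_succ n d k (by omega)]
        group
  · intro j hj h
    rw [Y_per n d hd k hj, show j + d + 1 = (j + 1) + d from by omega,
      Y_per n d hd (k + 1) (by omega)]
    exact h

end TY

section Braid
variable (n d : ℕ)

theorem braid_Y (hn : 2 ≤ n) (hd : 2 ≤ d) (i : ℕ) (hi1 : 1 ≤ i) (hi2 : i ≤ n - 2)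
    (k : ℕ) (hk1 : 1 ≤ k) (hk2 : k ≤ n - 1) (j : ℕ) (hj : j ≠ 0) :
    T n d i (T n d (i + 1) (T n d i (Y n d k j))) =
      T n d (i + 1) (T n d i (T n d (i + 1) (Y n d k j))) := by
  by_cases h1 : k + 1 = i
  · obtain rfl : i = k + 1 := h1.symm
    simp only [map_mul, map_inv, ne_eq, hj, Nat.succ_ne_zero, Nat.add_one_ne_zero, OfNat.ofNat_ne_zero,
      T_Y_p n d hd k (by omega) (by omega),
      T_Y_q n d hd (k + 1) (by omega) (by omega),
      T_Y_r n d hd (k + 1) (by omega),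
      T_Y_p n d hd (k + 1) (by omega) (by omega),
      T_Y_q n d hd (k + 1 + 1) (by omega) (by omega),
      T_Y_fix n d (k + 1 + 1) k (by omega) (by omega) (by omega) (by omega),
      not_false_eq_true]
    group
  · by_cases h2 : k = i
    · subst h2
      simp only [map_mul, map_inv, ne_eq, hj, Nat.succ_ne_zero, Nat.add_one_ne_zero, OfNat.ofNat_ne_zero,
        T_Y_q n d hd k (by omega) (by omega),
        T_Y_r n d hd k (by omega),
        T_Y_p n d hd k (by omega) (by omega),
        T_Y_q n d hd (k + 1) (by omega) (by omega),
        not_false_eq_true]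
      group
    · by_cases h3 : k = i + 1
      · subst h3
        simp only [map_mul, map_inv, ne_eq, hj, Nat.succ_ne_zero, Nat.add_one_ne_zero, OfNat.ofNat_ne_zero,
          T_Y_q n d hd i (by omega) (by omega),
          T_Y_r n d hd i (by omega),
          T_Y_p n d hd i (by omega) (by omega),
          T_Y_q n d hd (i + 1) (by omega) (by omega),
          not_false_eq_true]
        group
      · by_cases h4 : k = i + 2
        · obtain rfl : k = i + 1 + 1 := by omega
          simp only [map_mul, map_inv, ne_eq, hj, Nat.succ_ne_zero, Nat.add_one_ne_zero, OfNat.ofNat_ne_zero,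
            T_Y_fix n d i (i + 1 + 1) (by omega) (by omega) (by omega) (by omega),
            T_Y_q n d hd i (by omega) (by omega),
            T_Y_r n d hd i (by omega),
            T_Y_r n d hd (i + 1) (by omega),
            T_Y_q n d hd (i + 1) (by omega) (by omega),
            T_Y_p n d hd i (by omega) (by omega),
            not_false_eq_true]
          group
        · simp only [T_Y_fix n d i k (by omega) (by omega) (by omega) (by omega),
            T_Y_fix n d (i + 1) k (by omega) (by omega) (by omega) (by omega)]

theorem of_eq_X (hd : 2 ≤ d) (a : Fin (n - 1)) (b : Fin (d - 1)) :
    FreeGroup.of (a, b) = X n d ((a : ℕ) + 1) ((b : ℕ) + 1) := by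
  have ha := a.isLt
  have hb := b.isLt
  rw [X_of n d hd (k := (a : ℕ) + 1) (j := (b : ℕ) + 1) (by omega) (by omega) (by omega)]
  rfl

end Braid


/-- The endomorphisms `T_i` satisfy the braid relation: for each `i` with
`1 ≤ i ≤ n−2`, `T_i ∘ T_{i+1} ∘ T_i = T_{i+1} ∘ T_i ∘ T_{i+1}`
as endomorphisms of `F`. -/
theorem T_braid_relation (n d : ℕ) (hn : 2 ≤ n) (hd : 2 ≤ d)
    (i : ℕ) (hi1 : 1 ≤ i) (hi2 : i ≤ n - 2) :
    (T n d i).comp ((T n d (i + 1)).comp (T n d i)) =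
      (T n d (i + 1)).comp ((T n d i).comp (T n d (i + 1))) := by
  apply FreeGroup.ext_hom
  intro p
  obtain ⟨a, b⟩ := p
  have ha := a.isLt
  have hb := b.isLt
  simp only [MonoidHom.comp_apply]
  rw [of_eq_X n d hd a b, X_Y n d ((a : ℕ) + 1) (by omega),
    map_mul, map_inv, map_mul, map_inv, map_mul, map_inv,
    map_mul, map_inv, map_mul, map_inv, map_mul, map_inv,
    braid_Y n d hn hd i hi1 hi2 ((a : ℕ) + 1) (by omega) (by omega) ((b : ℕ) + 1) (by omega),
    braid_Y n d hn hd i hi1 hi2 ((a : ℕ) + 1) (by omega) (by omega) ((b : ℕ) + 1 + 1) (by omega)]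
end

section
/- There exists a group homomorphism φ_d from the braid group B_n to the automorphism group Aut(F) of the free group F of rank (d−1)(n−1) such that φ_d(σ_i) equals the automorphism T_i for each i = 1, …, n−1. -/
namespace BraidRep

variable {n d : ℕ}

theorem Y_zero (k : ℕ) : Y n d k 0 = 1 := by simp [Y]

theorem Y_one (k : ℕ) : Y n d k 1 = 1 := by simp [Y]

theorem Y_succ (k j : ℕ) (hj : 1 ≤ j) : Y n d k (j + 1) = Y n d k j * X n d k j := by
  obtain ⟨m, rfl⟩ := Nat.exists_eq_add_of_le hj
  simp only [Y, Nat.add_sub_cancel, Nat.succ_sub_one]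
  rw [show 1 + m = m + 1 by omega, List.range_succ]
  simp

theorem XY (k j : ℕ) (hj : 1 ≤ j) : X n d k j = (Y n d k j)⁻¹ * Y n d k (j + 1) := by
  rw [Y_succ k j hj]; group

theorem X_junk (k j : ℕ) (hk : ¬ (k - 1 < n - 1)) : X n d k j = 1 := by
  simp [X, hk]

theorem Y_junk (k j : ℕ) (hk : ¬ (k - 1 < n - 1)) : Y n d k j = 1 := by
  simp only [Y]
  apply List.prod_eq_one
  intro x hx
  simp only [List.mem_map] at hx
  obtain ⟨t, -, rfl⟩ := hx
  exact X_junk _ _ hk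

theorem X_d (hd : 2 ≤ d) (k : ℕ) : X n d k d = (Y n d k d)⁻¹ := by
  by_cases hk : k - 1 < n - 1
  · simp only [X, hk, dif_pos, Nat.mod_self, if_pos]
    rw [Y]
    congr 2
    apply List.ext_getElem
    · simp
    · intro t h1 h2
      simp only [List.getElem_ofFn, List.getElem_map, List.getElem_range]
      have ht : t < d - 1 := by simpa using h1
      have hmod : (t + 1) % d = t + 1 := Nat.mod_eq_of_lt (by omega)
      simp only [X, hk, dif_pos, hmod]
      rw [if_neg (by omega), dif_pos (by omega)]
      simp
  · rw [X_junk _ _ hk, Y_junk _ _ hk]; simp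

theorem X_period (k j : ℕ) : X n d k (j + d) = X n d k j := by
  simp [X, Nat.add_mod_right]

theorem Y_dp1 (hd : 2 ≤ d) (k : ℕ) : Y n d k (d + 1) = 1 := by
  rw [Y_succ k d (by omega), X_d hd]; group

theorem Y_period (hd : 2 ≤ d) (k j : ℕ) (hj : 1 ≤ j) : Y n d k (j + d) = Y n d k j := by
  induction j, hj using Nat.le_induction with
  | base => rw [show 1 + d = d + 1 by omega, Y_dp1 hd, Y_one]
  | succ j hj1 ih =>
    rw [show j + 1 + d = (j + d) + 1 by omega, Y_succ k (j+d) (by omega),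
      Y_succ k j hj1, ih, X_period]

theorem X_of (hn : 2 ≤ n) (hd : 2 ≤ d) (k j : ℕ) (hk1 : 1 ≤ k) (hk2 : k ≤ n - 1)
    (hj1 : 1 ≤ j) (hj2 : j ≤ d - 1) :
    X n d k j = FreeGroup.of (⟨k - 1, by omega⟩, ⟨j - 1, by omega⟩) := by
  have h1 : k - 1 < n - 1 := by omega
  have hmod : j % d = j := Nat.mod_eq_of_lt (by omega)
  simp only [X, h1, dif_pos, hmod]
  rw [if_neg (by omega), dif_pos (by omega)]

theorem of_eq (hn : 2 ≤ n) (hd : 2 ≤ d) (p : Fin (n-1) × Fin (d-1)) :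
    FreeGroup.of p = X n d ((p.1 : ℕ) + 1) ((p.2 : ℕ) + 1) := by
  obtain ⟨⟨a, ha⟩, ⟨b, hb⟩⟩ := p
  rw [X_of hn hd (a+1) (b+1) (by omega) (by omega) (by omega) (by omega)]
  simp

theorem Z_eq (i j : ℕ) (hj : 1 ≤ j) :
    ((List.range (j - 1)).map fun t => X n d i (t + 2)).prod
      = (X n d i 1)⁻¹ * Y n d i (j + 1) := by
  obtain ⟨m, rfl⟩ := Nat.exists_eq_add_of_le hj
  rw [show 1 + m - 1 = m by omega]
  simp only [Y]
  rw [show 1 + m + 1 - 1 = m + 1 by omega, List.range_succ_eq_map]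
  simp only [List.map_cons, List.prod_cons, List.map_map]
  rw [show ((fun t => X n d i (t + 1)) ∘ Nat.succ) = (fun t => X n d i (t + 2)) from ?_]
  · group
  · funext t; simp [Nat.succ_eq_add_one]

theorem T_gen_sub (hn : 2 ≤ n) (hd : 2 ≤ d) (i k e : ℕ) (hk : k + 1 = i)
    (hk1 : 1 ≤ k) (hk2 : k ≤ n - 1) (he1 : 1 ≤ e) (he2 : e ≤ d - 1) :
    T n d i (X n d k e) = (Y n d k e)⁻¹ * X n d i (e + 1) * Y n d k (e + 1) := by
  rw [X_of hn hd k e hk1 hk2 he1 he2]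
  simp only [T, FreeGroup.lift_apply_of]
  rw [show k - 1 + 1 = k by omega, show e - 1 + 1 = e by omega, if_pos hk]

theorem T_gen_self (hn : 2 ≤ n) (hd : 2 ≤ d) (i e : ℕ)
    (hi1 : 1 ≤ i) (hi2 : i ≤ n - 1) (he1 : 1 ≤ e) (he2 : e ≤ d - 1) :
    T n d i (X n d i e) =
      ((X n d i 1)⁻¹ * Y n d i (e + 1)) * (X n d i (e + 1))⁻¹ *
        ((X n d i 1)⁻¹ * Y n d i (e + 1))⁻¹ := by
  rw [X_of hn hd i e hi1 hi2 he1 he2]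
  simp only [T, FreeGroup.lift_apply_of]
  rw [show i - 1 + 1 = i by omega, show e - 1 + 1 = e by omega,
    if_neg (by omega), if_pos rfl, Z_eq i e he1]

theorem T_gen_sup (hn : 2 ≤ n) (hd : 2 ≤ d) (i k e : ℕ) (hk : k = i + 1)
    (hi1 : 1 ≤ i) (hk2 : k ≤ n - 1) (he1 : 1 ≤ e) (he2 : e ≤ d - 1) :
    T n d i (X n d k e) = (Y n d i e)⁻¹ * X n d k e * Y n d i (e + 1) := by
  rw [X_of hn hd k e (by omega) hk2 he1 he2]
  simp only [T, FreeGroup.lift_apply_of]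
  rw [show k - 1 + 1 = k by omega, show e - 1 + 1 = e by omega,
    if_neg (by omega), if_neg (by omega), if_pos hk,
    ← X_of hn hd k e (by omega) hk2 he1 he2]

theorem T_gen_other (hn : 2 ≤ n) (hd : 2 ≤ d) (i k e : ℕ)
    (h1 : k + 1 ≠ i) (h2 : k ≠ i) (h3 : k ≠ i + 1)
    (hk1 : 1 ≤ k) (hk2 : k ≤ n - 1) (he1 : 1 ≤ e) (he2 : e ≤ d - 1) :
    T n d i (X n d k e) = X n d k e := by
  rw [X_of hn hd k e hk1 hk2 he1 he2]
  simp only [T, FreeGroup.lift_apply_of]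
  rw [show k - 1 + 1 = k by omega, show e - 1 + 1 = e by omega,
    if_neg h1, if_neg h2, if_neg h3, ← X_of hn hd k e hk1 hk2 he1 he2]

/-- The inverse endomorphism of `T i`. -/
def Uinv (n d : ℕ) (i : ℕ) : Fgrp n d →* Fgrp n d :=
  FreeGroup.lift fun p =>
    let k := (p.1 : ℕ) + 1
    let j := (p.2 : ℕ) + 1
    if k + 1 = i then (Y n d k j)⁻¹ * X n d i j * Y n d k (j + 1)
    else if k = i then Y n d i (d + j - 1) * (Y n d i j)⁻¹
    else if k = i + 1 then
      Y n d i d * (Y n d i (d + j - 1))⁻¹ * X n d k j * Y n d i j * (Y n d i d)⁻¹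
    else FreeGroup.of p

theorem U_gen_sub (hn : 2 ≤ n) (hd : 2 ≤ d) (i k e : ℕ) (hk : k + 1 = i)
    (hk1 : 1 ≤ k) (hk2 : k ≤ n - 1) (he1 : 1 ≤ e) (he2 : e ≤ d - 1) :
    Uinv n d i (X n d k e) = (Y n d k e)⁻¹ * X n d i e * Y n d k (e + 1) := by
  rw [X_of hn hd k e hk1 hk2 he1 he2]
  simp only [Uinv, FreeGroup.lift_apply_of]
  rw [show k - 1 + 1 = k by omega, show e - 1 + 1 = e by omega, if_pos hk]

theorem U_gen_self (hn : 2 ≤ n) (hd : 2 ≤ d) (i e : ℕ)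
    (hi1 : 1 ≤ i) (hi2 : i ≤ n - 1) (he1 : 1 ≤ e) (he2 : e ≤ d - 1) :
    Uinv n d i (X n d i e) = Y n d i (d + e - 1) * (Y n d i e)⁻¹ := by
  rw [X_of hn hd i e hi1 hi2 he1 he2]
  simp only [Uinv, FreeGroup.lift_apply_of]
  rw [show i - 1 + 1 = i by omega, show e - 1 + 1 = e by omega,
    if_neg (by omega), if_pos rfl]

theorem U_gen_sup (hn : 2 ≤ n) (hd : 2 ≤ d) (i k e : ℕ) (hk : k = i + 1)
    (hi1 : 1 ≤ i) (hk2 : k ≤ n - 1) (he1 : 1 ≤ e) (he2 : e ≤ d - 1) :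
    Uinv n d i (X n d k e) =
      Y n d i d * (Y n d i (d + e - 1))⁻¹ * X n d k e * Y n d i e * (Y n d i d)⁻¹ := by
  rw [X_of hn hd k e (by omega) hk2 he1 he2]
  simp only [Uinv, FreeGroup.lift_apply_of]
  rw [show k - 1 + 1 = k by omega, show e - 1 + 1 = e by omega,
    if_neg (by omega), if_neg (by omega), if_pos hk,
    ← X_of hn hd k e (by omega) hk2 he1 he2]

theorem U_gen_other (hn : 2 ≤ n) (hd : 2 ≤ d) (i k e : ℕ)
    (h1 : k + 1 ≠ i) (h2 : k ≠ i) (h3 : k ≠ i + 1)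
    (hk1 : 1 ≤ k) (hk2 : k ≤ n - 1) (he1 : 1 ≤ e) (he2 : e ≤ d - 1) :
    Uinv n d i (X n d k e) = X n d k e := by
  rw [X_of hn hd k e hk1 hk2 he1 he2]
  simp only [Uinv, FreeGroup.lift_apply_of]
  rw [show k - 1 + 1 = k by omega, show e - 1 + 1 = e by omega,
    if_neg h1, if_neg h2, if_neg h3, ← X_of hn hd k e hk1 hk2 he1 he2]

/-- Extend an identity `f (Y k e) = R e`, valid for `e0 ≤ e ≤ d+1`, to all `e ≥ e0`,
using `d`-periodicity. -/
theorem hom_Y_ext (hd : 2 ≤ d) (f : Fgrp n d →* Fgrp n d) (k e0 : ℕ)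
    (he0 : 1 ≤ e0) (he0' : e0 ≤ 2) (R : ℕ → Fgrp n d)
    (hbase : ∀ e, e0 ≤ e → e ≤ d + 1 → f (Y n d k e) = R e)
    (hper : ∀ e, 2 ≤ e → R (e + d) = R e) :
    ∀ e, e0 ≤ e → f (Y n d k e) = R e := by
  intro e
  induction e using Nat.strong_induction_on with
  | _ e ih =>
    intro he
    by_cases hle : e ≤ d + 1
    · exact hbase e he hle
    · have hE : e = (e - d) + d := by omega
      rw [hE, Y_period hd k (e - d) (by omega), ih (e - d) (by omega) (by omega),
        hper (e - d) (by omega)]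

theorem TY_sub (hn : 2 ≤ n) (hd : 2 ≤ d) (i k : ℕ) (hk : k + 1 = i)
    (hk1 : 1 ≤ k) (hi2 : i ≤ n - 1) :
    ∀ e, 1 ≤ e → T n d i (Y n d k e) =
      (Y n d i 2)⁻¹ * Y n d i (e + 1) * Y n d k e := by
  refine hom_Y_ext hd _ k 1 le_rfl (by omega)
    (fun e => (Y n d i 2)⁻¹ * Y n d i (e + 1) * Y n d k e) ?_ ?_
  · intro e he1
    induction e, he1 using Nat.le_induction with
    | base =>
      intro _
      show T n d i (Y n d k 1) = (Y n d i 2)⁻¹ * Y n d i 2 * Y n d k 1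
      simp only [Y_one, map_one]; group
    | succ e he1 ih =>
      intro hle
      have ihe : T n d i (Y n d k e) = (Y n d i 2)⁻¹ * Y n d i (e + 1) * Y n d k e :=
        ih (by omega)
      show T n d i (Y n d k (e + 1)) =
        (Y n d i 2)⁻¹ * Y n d i (e + 1 + 1) * Y n d k (e + 1)
      conv_lhs => rw [Y_succ k e (by omega)]
      rw [map_mul, ihe]
      by_cases hed : e ≤ d - 1
      · rw [T_gen_sub hn hd i k e hk hk1 (by omega) (by omega) hed,
          XY i (e + 1) (by omega)]
        group
      · obtain rfl : d = e := by omega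
        rw [X_d hd, map_inv, ihe, Y_dp1 hd k,
          show d + 1 + 1 = 2 + d by omega, Y_period hd i 2 (by omega)]
        group
  · intro e he2
    show (Y n d i 2)⁻¹ * Y n d i (e + d + 1) * Y n d k (e + d) =
      (Y n d i 2)⁻¹ * Y n d i (e + 1) * Y n d k e
    rw [show e + d + 1 = (e + 1) + d by omega, Y_period hd i (e + 1) (by omega),
      Y_period hd k e (by omega)]

theorem TY_self (hn : 2 ≤ n) (hd : 2 ≤ d) (i : ℕ) (hi1 : 1 ≤ i) (hi2 : i ≤ n - 1) :
    ∀ e, 1 ≤ e → T n d i (Y n d i e) = (Y n d i (e + 1))⁻¹ * Y n d i 2 := by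
  refine hom_Y_ext hd _ i 1 le_rfl (by omega)
    (fun e => (Y n d i (e + 1))⁻¹ * Y n d i 2) ?_ ?_
  · intro e he1
    induction e, he1 using Nat.le_induction with
    | base =>
      intro _
      show T n d i (Y n d i 1) = (Y n d i 2)⁻¹ * Y n d i 2
      simp only [Y_one, map_one]; group
    | succ e he1 ih =>
      intro hle
      have ihe : T n d i (Y n d i e) = (Y n d i (e + 1))⁻¹ * Y n d i 2 :=
        ih (by omega)
      show T n d i (Y n d i (e + 1)) = (Y n d i (e + 1 + 1))⁻¹ * Y n d i 2
      conv_lhs => rw [Y_succ i e (by omega)]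
      rw [map_mul, ihe]
      by_cases hed : e ≤ d - 1
      · rw [T_gen_self hn hd i e hi1 hi2 (by omega) hed,
          XY i (e + 1) (by omega), XY i 1 (by omega), Y_one]
        group
      · obtain rfl : d = e := by omega
        rw [X_d hd, map_inv, ihe,
          show d + 1 + 1 = 2 + d by omega, Y_period hd i 2 (by omega)]
        group
  · intro e he2
    show (Y n d i (e + d + 1))⁻¹ * Y n d i 2 = (Y n d i (e + 1))⁻¹ * Y n d i 2
    rw [show e + d + 1 = (e + 1) + d by omega, Y_period hd i (e + 1) (by omega)]

theorem TY_sup (hn : 2 ≤ n) (hd : 2 ≤ d) (i k : ℕ) (hk : k = i + 1)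
    (hi1 : 1 ≤ i) (hk2 : k ≤ n - 1) :
    ∀ e, 1 ≤ e → T n d i (Y n d k e) = Y n d k e * Y n d i e := by
  refine hom_Y_ext hd _ k 1 le_rfl (by omega)
    (fun e => Y n d k e * Y n d i e) ?_ ?_
  · intro e he1
    induction e, he1 using Nat.le_induction with
    | base =>
      intro _
      show T n d i (Y n d k 1) = Y n d k 1 * Y n d i 1
      simp only [Y_one, map_one]; group
    | succ e he1 ih =>
      intro hle
      have ihe : T n d i (Y n d k e) = Y n d k e * Y n d i e := ih (by omega)
      show T n d i (Y n d k (e + 1)) = Y n d k (e + 1) * Y n d i (e + 1)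
      conv_lhs => rw [Y_succ k e (by omega)]
      rw [map_mul, ihe]
      by_cases hed : e ≤ d - 1
      · rw [T_gen_sup hn hd i k e hk hi1 hk2 (by omega) hed, XY k e (by omega)]
        group
      · obtain rfl : d = e := by omega
        rw [X_d hd, map_inv, ihe, Y_dp1 hd k, Y_dp1 hd i]
        group
  · intro e he2
    show Y n d k (e + d) * Y n d i (e + d) = Y n d k e * Y n d i e
    rw [Y_period hd i e (by omega), Y_period hd k e (by omega)]

theorem TY_other (hn : 2 ≤ n) (hd : 2 ≤ d) (i k : ℕ)
    (h1 : k + 1 ≠ i) (h2 : k ≠ i) (h3 : k ≠ i + 1)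
    (hk1 : 1 ≤ k) (hk2 : k ≤ n - 1) :
    ∀ e, 1 ≤ e → T n d i (Y n d k e) = Y n d k e := by
  refine hom_Y_ext hd _ k 1 le_rfl (by omega) (fun e => Y n d k e) ?_ ?_
  · intro e he1
    induction e, he1 using Nat.le_induction with
    | base =>
      intro _
      show T n d i (Y n d k 1) = Y n d k 1
      simp only [Y_one, map_one]
    | succ e he1 ih =>
      intro hle
      have ihe : T n d i (Y n d k e) = Y n d k e := ih (by omega)
      show T n d i (Y n d k (e + 1)) = Y n d k (e + 1)
      conv_lhs => rw [Y_succ k e (by omega)]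
      rw [map_mul, ihe]
      by_cases hed : e ≤ d - 1
      · rw [T_gen_other hn hd i k e h1 h2 h3 hk1 hk2 (by omega) hed,
          XY k e (by omega)]
        group
      · obtain rfl : d = e := by omega
        rw [X_d hd, map_inv, ihe, Y_dp1 hd k]
        group
  · intro e he2
    show Y n d k (e + d) = Y n d k e
    rw [Y_period hd k e (by omega)]

theorem UY_sub (hn : 2 ≤ n) (hd : 2 ≤ d) (i k : ℕ) (hk : k + 1 = i)
    (hk1 : 1 ≤ k) (hi2 : i ≤ n - 1) :
    ∀ e, 1 ≤ e → Uinv n d i (Y n d k e) = Y n d i e * Y n d k e := by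
  refine hom_Y_ext hd _ k 1 le_rfl (by omega)
    (fun e => Y n d i e * Y n d k e) ?_ ?_
  · intro e he1
    induction e, he1 using Nat.le_induction with
    | base =>
      intro _
      show Uinv n d i (Y n d k 1) = Y n d i 1 * Y n d k 1
      simp only [Y_one, map_one]; group
    | succ e he1 ih =>
      intro hle
      have ihe : Uinv n d i (Y n d k e) = Y n d i e * Y n d k e := ih (by omega)
      show Uinv n d i (Y n d k (e + 1)) = Y n d i (e + 1) * Y n d k (e + 1)
      conv_lhs => rw [Y_succ k e (by omega)]
      rw [map_mul, ihe]
      by_cases hed : e ≤ d - 1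
      · rw [U_gen_sub hn hd i k e hk hk1 (by omega) (by omega) hed,
          XY i e (by omega)]
        group
      · obtain rfl : d = e := by omega
        rw [X_d hd, map_inv, ihe, Y_dp1 hd k, Y_dp1 hd i]
        group
  · intro e he2
    show Y n d i (e + d) * Y n d k (e + d) = Y n d i e * Y n d k e
    rw [Y_period hd i e (by omega), Y_period hd k e (by omega)]

theorem UY_self (hn : 2 ≤ n) (hd : 2 ≤ d) (i : ℕ) (hi1 : 1 ≤ i) (hi2 : i ≤ n - 1) :
    ∀ e, 2 ≤ e → Uinv n d i (Y n d i e) = Y n d i d * (Y n d i (e - 1))⁻¹ := by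
  refine hom_Y_ext hd _ i 2 (by omega) le_rfl
    (fun e => Y n d i d * (Y n d i (e - 1))⁻¹) ?_ ?_
  · intro e he1
    induction e, he1 using Nat.le_induction with
    | base =>
      intro _
      have h2 : Y n d i 2 = X n d i 1 := by
        rw [show (2:ℕ) = 1 + 1 from rfl, Y_succ i 1 le_rfl, Y_one, one_mul]
      show Uinv n d i (Y n d i 2) = Y n d i d * (Y n d i 1)⁻¹
      rw [h2, U_gen_self hn hd i 1 hi1 hi2 le_rfl (by omega),
        show d + 1 - 1 = d by omega]
    | succ e he1 ih =>
      intro hle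
      have ihe : Uinv n d i (Y n d i e) = Y n d i d * (Y n d i (e - 1))⁻¹ :=
        ih (by omega)
      show Uinv n d i (Y n d i (e + 1)) = Y n d i d * (Y n d i e)⁻¹
      conv_lhs => rw [Y_succ i e (by omega)]
      rw [map_mul, ihe]
      by_cases hed : e ≤ d - 1
      · rw [U_gen_self hn hd i e hi1 hi2 (by omega) hed,
          show d + e - 1 = (e - 1) + d by omega, Y_period hd i (e - 1) (by omega)]
        group
      · obtain rfl : d = e := by omega
        rw [X_d hd, map_inv, ihe]
        group
  · intro e he2
    show Y n d i d * (Y n d i (e + d - 1))⁻¹ = Y n d i d * (Y n d i (e - 1))⁻¹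
    rw [show e + d - 1 = (e - 1) + d by omega, Y_period hd i (e - 1) (by omega)]

theorem UY_sup (hn : 2 ≤ n) (hd : 2 ≤ d) (i k : ℕ) (hk : k = i + 1)
    (hi1 : 1 ≤ i) (hk2 : k ≤ n - 1) :
    ∀ e, 2 ≤ e → Uinv n d i (Y n d k e) =
      Y n d k e * Y n d i (e - 1) * (Y n d i d)⁻¹ := by
  refine hom_Y_ext hd _ k 2 (by omega) le_rfl
    (fun e => Y n d k e * Y n d i (e - 1) * (Y n d i d)⁻¹) ?_ ?_
  · intro e he1
    induction e, he1 using Nat.le_induction with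
    | base =>
      intro _
      have h2 : Y n d k 2 = X n d k 1 := by
        rw [show (2:ℕ) = 1 + 1 from rfl, Y_succ k 1 le_rfl, Y_one, one_mul]
      show Uinv n d i (Y n d k 2) = Y n d k 2 * Y n d i 1 * (Y n d i d)⁻¹
      rw [h2, U_gen_sup hn hd i k 1 hk hi1 hk2 le_rfl (by omega),
        show d + 1 - 1 = d by omega, Y_one]
      group
    | succ e he1 ih =>
      intro hle
      have ihe : Uinv n d i (Y n d k e) =
        Y n d k e * Y n d i (e - 1) * (Y n d i d)⁻¹ := ih (by omega)
      show Uinv n d i (Y n d k (e + 1)) =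
        Y n d k (e + 1) * Y n d i e * (Y n d i d)⁻¹
      conv_lhs => rw [Y_succ k e (by omega)]
      rw [map_mul, ihe]
      by_cases hed : e ≤ d - 1
      · rw [U_gen_sup hn hd i k e hk hi1 hk2 (by omega) hed,
          show d + e - 1 = (e - 1) + d by omega, Y_period hd i (e - 1) (by omega),
          XY k e (by omega)]
        group
      · obtain rfl : d = e := by omega
        rw [X_d hd, map_inv, ihe, Y_dp1 hd k]
        group
  · intro e he2
    show Y n d k (e + d) * Y n d i (e + d - 1) * (Y n d i d)⁻¹ =
      Y n d k e * Y n d i (e - 1) * (Y n d i d)⁻¹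
    rw [show e + d - 1 = (e - 1) + d by omega, Y_period hd i (e - 1) (by omega),
      Y_period hd k e (by omega)]

theorem UY_other (hn : 2 ≤ n) (hd : 2 ≤ d) (i k : ℕ)
    (h1 : k + 1 ≠ i) (h2 : k ≠ i) (h3 : k ≠ i + 1)
    (hk1 : 1 ≤ k) (hk2 : k ≤ n - 1) :
    ∀ e, 1 ≤ e → Uinv n d i (Y n d k e) = Y n d k e := by
  refine hom_Y_ext hd _ k 1 le_rfl (by omega) (fun e => Y n d k e) ?_ ?_
  · intro e he1
    induction e, he1 using Nat.le_induction with
    | base =>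
      intro _
      show Uinv n d i (Y n d k 1) = Y n d k 1
      simp only [Y_one, map_one]
    | succ e he1 ih =>
      intro hle
      have ihe : Uinv n d i (Y n d k e) = Y n d k e := ih (by omega)
      show Uinv n d i (Y n d k (e + 1)) = Y n d k (e + 1)
      conv_lhs => rw [Y_succ k e (by omega)]
      rw [map_mul, ihe]
      by_cases hed : e ≤ d - 1
      · rw [U_gen_other hn hd i k e h1 h2 h3 hk1 hk2 (by omega) hed,
          XY k e (by omega)]
        group
      · obtain rfl : d = e := by omega
        rw [X_d hd, map_inv, ihe, Y_dp1 hd k]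
        group
  · intro e he2
    show Y n d k (e + d) = Y n d k e
    rw [Y_period hd k e (by omega)]

theorem U_T (hn : 2 ≤ n) (hd : 2 ≤ d) (i : ℕ) (hi1 : 1 ≤ i) (hi2 : i ≤ n - 1) :
    (Uinv n d i).comp (T n d i) = MonoidHom.id (Fgrp n d) := by
  apply FreeGroup.ext_hom
  intro p
  simp only [MonoidHom.comp_apply, MonoidHom.id_apply]
  have hk1 : 1 ≤ (p.1 : ℕ) + 1 := by omega
  have hk2 : (p.1 : ℕ) + 1 ≤ n - 1 := by have := p.1.isLt; omega
  have hj2 : (p.2 : ℕ) + 1 ≤ d - 1 := by have := p.2.isLt; omega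
  rw [of_eq hn hd p, XY _ _ (by omega)]
  by_cases hc1 : (p.1 : ℕ) + 1 + 1 = i
  · simp (disch := omega) only [map_mul, map_inv, map_one,
      TY_sub hn hd i _ hc1 hk1 hi2, UY_sub hn hd i _ hc1 hk1 hi2,
      UY_self hn hd i hi1 hi2, Y_one, Y_dp1 hd, Nat.add_sub_cancel,
      show (2:ℕ) - 1 = 1 from rfl]
    group
  · by_cases hc2 : (p.1 : ℕ) + 1 = i
    · simp (disch := omega) only [map_mul, map_inv, map_one,
        TY_self hn hd i hi1 hi2, UY_self hn hd i hi1 hi2,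
        hc2, Y_one, Y_dp1 hd, Nat.add_sub_cancel,
        show (2:ℕ) - 1 = 1 from rfl]
      group
    · by_cases hc3 : (p.1 : ℕ) + 1 = i + 1
      · rcases Nat.eq_zero_or_pos (p.2 : ℕ) with hj0 | hj0
        · simp (disch := omega) only [map_mul, map_inv, map_one, hj0,
            TY_sup hn hd i _ hc3 hi1 (by omega), UY_sup hn hd i _ hc3 hi1 (by omega),
            UY_self hn hd i hi1 hi2, Y_one, Y_dp1 hd, Nat.add_sub_cancel,
            Nat.zero_add, show (2:ℕ) - 1 = 1 from rfl]
          group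
        · simp (disch := omega) only [map_mul, map_inv, map_one,
            TY_sup hn hd i _ hc3 hi1 (by omega), UY_sup hn hd i _ hc3 hi1 (by omega),
            UY_self hn hd i hi1 hi2, Y_one, Y_dp1 hd, Nat.add_sub_cancel,
            show (2:ℕ) - 1 = 1 from rfl]
          group
      · simp (disch := omega) only [map_mul, map_inv, map_one,
          TY_other hn hd i _ hc1 hc2 hc3 hk1 hk2,
          UY_other hn hd i _ hc1 hc2 hc3 hk1 hk2]

theorem T_U (hn : 2 ≤ n) (hd : 2 ≤ d) (i : ℕ) (hi1 : 1 ≤ i) (hi2 : i ≤ n - 1) :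
    (T n d i).comp (Uinv n d i) = MonoidHom.id (Fgrp n d) := by
  apply FreeGroup.ext_hom
  intro p
  simp only [MonoidHom.comp_apply, MonoidHom.id_apply]
  have hk1 : 1 ≤ (p.1 : ℕ) + 1 := by omega
  have hk2 : (p.1 : ℕ) + 1 ≤ n - 1 := by have := p.1.isLt; omega
  have hj2 : (p.2 : ℕ) + 1 ≤ d - 1 := by have := p.2.isLt; omega
  rw [of_eq hn hd p, XY _ _ (by omega)]
  by_cases hc1 : (p.1 : ℕ) + 1 + 1 = i
  · simp (disch := omega) only [map_mul, map_inv, map_one,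
      UY_sub hn hd i _ hc1 hk1 hi2, TY_sub hn hd i _ hc1 hk1 hi2,
      TY_self hn hd i hi1 hi2, Y_one, Y_dp1 hd, Nat.add_sub_cancel,
      show (2:ℕ) - 1 = 1 from rfl]
    group
  · by_cases hc2 : (p.1 : ℕ) + 1 = i
    · rcases Nat.eq_zero_or_pos (p.2 : ℕ) with hj0 | hj0
      · simp (disch := omega) only [map_mul, map_inv, map_one, hj0, hc2,
          UY_self hn hd i hi1 hi2, TY_self hn hd i hi1 hi2,
          Y_one, Y_dp1 hd, Nat.add_sub_cancel, Nat.zero_add,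
          show (2:ℕ) - 1 = 1 from rfl]
        group
      · simp (disch := omega) only [map_mul, map_inv, map_one, hc2,
          UY_self hn hd i hi1 hi2, TY_self hn hd i hi1 hi2,
          Y_one, Y_dp1 hd, Nat.add_sub_cancel,
          show (2:ℕ) - 1 = 1 from rfl]
        group
    · by_cases hc3 : (p.1 : ℕ) + 1 = i + 1
      · rcases Nat.eq_zero_or_pos (p.2 : ℕ) with hj0 | hj0
        · simp (disch := omega) only [map_mul, map_inv, map_one, hj0,
            UY_sup hn hd i _ hc3 hi1 (by omega), TY_sup hn hd i _ hc3 hi1 (by omega),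
            UY_self hn hd i hi1 hi2, TY_self hn hd i hi1 hi2,
            Y_one, Y_dp1 hd, Nat.add_sub_cancel, Nat.zero_add,
            show (2:ℕ) - 1 = 1 from rfl]
          group
        · simp (disch := omega) only [map_mul, map_inv, map_one,
            UY_sup hn hd i _ hc3 hi1 (by omega), TY_sup hn hd i _ hc3 hi1 (by omega),
            UY_self hn hd i hi1 hi2, TY_self hn hd i hi1 hi2,
            Y_one, Y_dp1 hd, Nat.add_sub_cancel,
            show (2:ℕ) - 1 = 1 from rfl]
          group
      · simp (disch := omega) only [map_mul, map_inv, map_one,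
          UY_other hn hd i _ hc1 hc2 hc3 hk1 hk2,
          TY_other hn hd i _ hc1 hc2 hc3 hk1 hk2]

theorem T_braid (hn : 2 ≤ n) (hd : 2 ≤ d) (i : ℕ) (hi1 : 1 ≤ i) (hi2 : i + 1 ≤ n - 1) :
    (T n d i).comp ((T n d (i+1)).comp (T n d i)) =
      (T n d (i+1)).comp ((T n d i).comp (T n d (i+1))) := by
  apply FreeGroup.ext_hom
  intro p
  simp only [MonoidHom.comp_apply]
  have hk1 : 1 ≤ (p.1 : ℕ) + 1 := by omega
  have hk2 : (p.1 : ℕ) + 1 ≤ n - 1 := by have := p.1.isLt; omega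
  have hj2 : (p.2 : ℕ) + 1 ≤ d - 1 := by have := p.2.isLt; omega
  rw [of_eq hn hd p, XY _ _ (by omega)]
  by_cases hc1 : (p.1 : ℕ) + 1 + 1 = i
  · -- row i-1
    simp (disch := omega) only [map_mul, map_inv, map_one,
      TY_sub hn hd i _ hc1 hk1 (by omega),
      TY_self hn hd i hi1 (by omega),
      TY_sup hn hd i (i+1) rfl hi1 hi2,
      TY_sub hn hd (i+1) i rfl (by omega) hi2,
      TY_self hn hd (i+1) (by omega) hi2,
      TY_other hn hd (i+1) _ (by omega) (by omega) (by omega) hk1 hk2]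
    group
  · by_cases hc2 : (p.1 : ℕ) + 1 = i
    · -- row i
      simp (disch := omega) only [map_mul, map_inv, map_one, hc2,
        TY_self hn hd i hi1 (by omega),
        TY_sup hn hd i (i+1) rfl hi1 hi2,
        TY_sub hn hd (i+1) i rfl (by omega) hi2,
        TY_self hn hd (i+1) (by omega) hi2]
      group
    · by_cases hc3 : (p.1 : ℕ) + 1 = i + 1
      · -- row i+1
        simp (disch := omega) only [map_mul, map_inv, map_one, hc3,
          TY_self hn hd i hi1 (by omega),
          TY_sup hn hd i (i+1) rfl hi1 hi2,
          TY_sub hn hd (i+1) i rfl (by omega) hi2,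
          TY_self hn hd (i+1) (by omega) hi2]
        group
      · by_cases hc4 : (p.1 : ℕ) + 1 = i + 2
        · -- row i+2
          simp (disch := omega) only [map_mul, map_inv, map_one, hc4,
            TY_other hn hd i (i+2) (by omega) (by omega) (by omega) (by omega) (by omega),
            TY_sup hn hd (i+1) (i+2) rfl (by omega) (by omega),
            TY_self hn hd i hi1 (by omega),
            TY_sup hn hd i (i+1) rfl hi1 hi2,
            TY_sub hn hd (i+1) i rfl (by omega) hi2,
            TY_self hn hd (i+1) (by omega) hi2]
          group
        · -- other rows
          simp (disch := omega) only [map_mul, map_inv, map_one,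
            TY_other hn hd i _ (by omega) (by omega) (by omega) hk1 hk2,
            TY_other hn hd (i+1) _ (by omega) (by omega) (by omega) hk1 hk2]

theorem T_comm (hn : 2 ≤ n) (hd : 2 ≤ d) (i i' : ℕ) (hi1 : 1 ≤ i)
    (hii : i + 2 ≤ i') (hi2 : i' ≤ n - 1) :
    (T n d i).comp (T n d i') = (T n d i').comp (T n d i) := by
  apply FreeGroup.ext_hom
  intro p
  simp only [MonoidHom.comp_apply]
  have hk1 : 1 ≤ (p.1 : ℕ) + 1 := by omega
  have hk2 : (p.1 : ℕ) + 1 ≤ n - 1 := by have := p.1.isLt; omega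
  have hj2 : (p.2 : ℕ) + 1 ≤ d - 1 := by have := p.2.isLt; omega
  rw [of_eq hn hd p, XY _ _ (by omega)]
  by_cases hc1 : (p.1 : ℕ) + 1 + 1 = i
  · simp (disch := omega) only [map_mul, map_inv, map_one,
      TY_sub hn hd i _ hc1 hk1 (by omega),
      TY_other hn hd i' _ (by omega) (by omega) (by omega) hk1 hk2,
      TY_other hn hd i' i (by omega) (by omega) (by omega) (by omega) (by omega)]
  · by_cases hc2 : (p.1 : ℕ) + 1 = i
    · simp (disch := omega) only [map_mul, map_inv, map_one, hc2,
        TY_self hn hd i hi1 (by omega),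
        TY_other hn hd i' i (by omega) (by omega) (by omega) (by omega) (by omega)]
    · by_cases hc3 : (p.1 : ℕ) + 1 = i + 1
      · by_cases ho : i' = i + 2
        · subst ho
          simp (disch := omega) only [map_mul, map_inv, map_one, hc3,
            TY_sup hn hd i (i+1) rfl hi1 (by omega),
            TY_sub hn hd (i+2) (i+1) rfl (by omega) hi2,
            TY_other hn hd i (i+2) (by omega) (by omega) (by omega) (by omega) (by omega),
            TY_other hn hd (i+2) i (by omega) (by omega) (by omega) (by omega) (by omega)]
          group
        · simp (disch := omega) only [map_mul, map_inv, map_one, hc3,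
            TY_sup hn hd i (i+1) rfl hi1 (by omega),
            TY_other hn hd i' (i+1) (by omega) (by omega) (by omega) (by omega) (by omega),
            TY_other hn hd i' i (by omega) (by omega) (by omega) (by omega) (by omega)]
      · by_cases hc4 : (p.1 : ℕ) + 1 + 1 = i'
        · simp (disch := omega) only [map_mul, map_inv, map_one,
            TY_sub hn hd i' _ hc4 hk1 hi2,
            TY_other hn hd i _ (by omega) (by omega) (by omega) hk1 hk2,
            TY_other hn hd i i' (by omega) (by omega) (by omega) (by omega) (by omega)]
        · by_cases hc5 : (p.1 : ℕ) + 1 = i'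
          · simp (disch := omega) only [map_mul, map_inv, map_one, hc5,
              TY_self hn hd i' (by omega) hi2,
              TY_other hn hd i i' (by omega) (by omega) (by omega) (by omega) (by omega)]
          · by_cases hc6 : (p.1 : ℕ) + 1 = i' + 1
            · simp (disch := omega) only [map_mul, map_inv, map_one, hc6,
                TY_sup hn hd i' (i'+1) rfl (by omega) (by omega),
                TY_other hn hd i (i'+1) (by omega) (by omega) (by omega) (by omega) (by omega),
                TY_other hn hd i i' (by omega) (by omega) (by omega) (by omega) (by omega)]
            · simp (disch := omega) only [map_mul, map_inv, map_one,
                TY_other hn hd i _ (by omega) (by omega) (by omega) hk1 hk2,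
                TY_other hn hd i' _ (by omega) (by omega) (by omega) hk1 hk2]

/-- `T i` as an automorphism of the free group. -/
def Te (n d i : ℕ) (hn : 2 ≤ n) (hd : 2 ≤ d) (hi1 : 1 ≤ i) (hi2 : i ≤ n - 1) :
    MulAut (Fgrp n d) where
  toFun := T n d i
  invFun := Uinv n d i
  left_inv := fun x => by
    have h := DFunLike.congr_fun (U_T hn hd i hi1 hi2) x
    simpa using h
  right_inv := fun x => by
    have h := DFunLike.congr_fun (T_U hn hd i hi1 hi2) x
    simpa using h
  map_mul' := map_mul _

theorem Te_apply (n d i : ℕ) (hn : 2 ≤ n) (hd : 2 ≤ d) (hi1 : 1 ≤ i)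
    (hi2 : i ≤ n - 1) (x : Fgrp n d) :
    Te n d i hn hd hi1 hi2 x = T n d i x := rfl

end BraidRep

/-- There is a group homomorphism `φ_d : B_n → Aut(F)` of the braid group into
the automorphism group of the free group `F` of rank `(d−1)(n−1)` sending each
braid generator `σ_i` (for `i = 1, …, n−1`) to the automorphism `T_i`. -/
theorem exists_braid_representation_free (n d : ℕ) (hn : 2 ≤ n) (hd : 2 ≤ d) :
    ∃ φ : BraidGroup n →* MulAut (Fgrp n d),
      ∀ (i : ℕ), 1 ≤ i → i ≤ n - 1 → ∀ (h : i - 1 < n - 1) (x : Fgrp n d),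
        φ (PresentedGroup.of (rels := braidRels (n - 1)) ⟨i - 1, h⟩) x =
          T n d i x := by
  have hrels : ∀ r ∈ braidRels (n - 1),
      FreeGroup.lift (fun a : Fin (n-1) =>
        BraidRep.Te n d ((a : ℕ) + 1) hn hd (by omega)
          (by have := a.isLt; omega)) r = 1 := by
    intro r hr
    rcases hr with ⟨a, b, hab, rfl⟩ | ⟨a, b, hab, rfl⟩
    · simp only [map_mul, map_inv, FreeGroup.lift_apply_of]
      rw [mul_inv_eq_one]
      have hb' : (b : ℕ) + 1 = ((a : ℕ) + 1) + 1 := by omega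
      have hbd : ((a : ℕ) + 1) + 1 ≤ n - 1 := by have := b.isLt; omega
      ext x
      simp only [MulAut.mul_apply, BraidRep.Te_apply, hb']
      have h := DFunLike.congr_fun (BraidRep.T_braid hn hd ((a : ℕ) + 1)
        (by omega) hbd) x
      simpa only [MonoidHom.comp_apply] using h
    · simp only [map_mul, map_inv, FreeGroup.lift_apply_of]
      rw [mul_inv_eq_one]
      have hbd : (b : ℕ) + 1 ≤ n - 1 := by have := b.isLt; omega
      ext x
      simp only [MulAut.mul_apply, BraidRep.Te_apply]
      have h := DFunLike.congr_fun (BraidRep.T_comm hn hd ((a : ℕ) + 1)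
        ((b : ℕ) + 1) (by omega) (by omega) hbd) x
      simpa only [MonoidHom.comp_apply] using h
  refine ⟨PresentedGroup.toGroup hrels, ?_⟩
  intro i hi1 hi2 h x
  rw [PresentedGroup.toGroup.of]
  show BraidRep.Te n d ((i - 1 : ℕ) + 1) hn hd _ _ x = T n d i x
  rw [BraidRep.Te_apply, show (i - 1 : ℕ) + 1 = i by omega]
end
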